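/- arXiv:2008.04971 — 4 statements merged into one kernel-verified Lean document; each statement's English description precedes it below -/
import Mathlib

section
/- Let σ, τ ∈ 𝒩(F₂) be power series whose coefficients of t¹, t², t³, t⁴, t⁵ are respectively 1, 1, 0, 0, 0 for σ and 1, 1, 0, 1, 0 for τ (i.e., σ = t + t² + O(t⁶) and τ = t + t² + t⁴ + O(t⁶)). Then σ and τ are not conjugate in 𝒩(F₂): there is no ψ ∈ 𝒩(F₂) with σ ∘ ψ = ψ ∘ τ. -/
open PowerSeries

abbrev F2 := ZMod 2

/-- Composition of power series `σ ∘ τ` (substitution of `τ` into `σ`), valid when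
`τ` has zero constant coefficient. -/
noncomputable def ngComp (σ τ : PowerSeries F2) : PowerSeries F2 :=
  PowerSeries.mk fun k =>
    ∑ n ∈ Finset.range (k + 1), PowerSeries.coeff n σ * PowerSeries.coeff k (τ ^ n)

/-- Membership in the Nottingham group: `σ ≡ t (mod t²)`. -/
def IsNott (σ : PowerSeries F2) : Prop :=
  PowerSeries.coeff 0 σ = 0 ∧ PowerSeries.coeff 1 σ = 1

lemma cmul (f g : PowerSeries F2) (k : ℕ) :
    PowerSeries.coeff k (f * g) =
      ∑ i ∈ Finset.range (k+1), PowerSeries.coeff i f * PowerSeries.coeff (k-i) g := by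
  rw [PowerSeries.coeff_mul, Finset.Nat.sum_antidiagonal_eq_sum_range_succ_mk]

theorem statement1 (σ τ : PowerSeries F2) (hσ : IsNott σ) (hτ : IsNott τ)
    (hσ2 : PowerSeries.coeff 2 σ = 1) (hσ3 : PowerSeries.coeff 3 σ = 0)
    (hσ4 : PowerSeries.coeff 4 σ = 0) (hσ5 : PowerSeries.coeff 5 σ = 0)
    (hτ2 : PowerSeries.coeff 2 τ = 1) (hτ3 : PowerSeries.coeff 3 τ = 0)
    (hτ4 : PowerSeries.coeff 4 τ = 1) (hτ5 : PowerSeries.coeff 5 τ = 0) :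
    ¬ ∃ ψ : PowerSeries F2, IsNott ψ ∧ ngComp σ ψ = ngComp ψ τ := by
  obtain ⟨hσ0, hσ1⟩ := hσ
  obtain ⟨hτ0, hτ1⟩ := hτ
  rintro ⟨ψ, ⟨hψ0, hψ1⟩, hcomp⟩
  -- coefficients of τ^2
  have t2_0 : PowerSeries.coeff 0 (τ^2) = 0 := by
    rw [pow_two, cmul]; simp [Finset.sum_range_succ, hτ0]
  have t2_1 : PowerSeries.coeff 1 (τ^2) = 0 := by
    rw [pow_two, cmul]; simp [Finset.sum_range_succ, hτ0, hτ1]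
  have t2_2 : PowerSeries.coeff 2 (τ^2) = 1 := by
    rw [pow_two, cmul]; simp [Finset.sum_range_succ, hτ0, hτ1, hτ2]
  have t2_3 : PowerSeries.coeff 3 (τ^2) = 0 := by
    rw [pow_two, cmul]; simp [Finset.sum_range_succ, hτ0, hτ1, hτ2, hτ3]; try decide
  have t2_4 : PowerSeries.coeff 4 (τ^2) = 1 := by
    rw [pow_two, cmul]; simp [Finset.sum_range_succ, hτ0, hτ1, hτ2, hτ3, hτ4]; try decide
  have t2_5 : PowerSeries.coeff 5 (τ^2) = 0 := by
    rw [pow_two, cmul]; simp [Finset.sum_range_succ, hτ0, hτ1, hτ2, hτ3, hτ4, hτ5]; try decide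
  -- coefficients of τ^3
  have hp3 : (τ:PowerSeries F2)^3 = τ^2 * τ := by ring
  have t3_0 : PowerSeries.coeff 0 (τ^3) = 0 := by
    rw [hp3, cmul]; simp [Finset.sum_range_succ, t2_0, hτ0]
  have t3_1 : PowerSeries.coeff 1 (τ^3) = 0 := by
    rw [hp3, cmul]; simp [Finset.sum_range_succ, t2_0, t2_1, hτ0, hτ1]
  have t3_2 : PowerSeries.coeff 2 (τ^3) = 0 := by
    rw [hp3, cmul]; simp [Finset.sum_range_succ, t2_0, t2_1, t2_2, hτ0, hτ1, hτ2]
  have t3_3 : PowerSeries.coeff 3 (τ^3) = 1 := by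
    rw [hp3, cmul]
    simp [Finset.sum_range_succ, t2_0, t2_1, t2_2, t2_3, hτ0, hτ1, hτ2, hτ3]
  have t3_4 : PowerSeries.coeff 4 (τ^3) = 1 := by
    rw [hp3, cmul]
    simp [Finset.sum_range_succ, t2_0, t2_1, t2_2, t2_3, t2_4, hτ0, hτ1, hτ2, hτ3, hτ4]
  have t3_5 : PowerSeries.coeff 5 (τ^3) = 1 := by
    rw [hp3, cmul]
    simp [Finset.sum_range_succ, t2_0, t2_1, t2_2, t2_3, t2_4, t2_5,
      hτ0, hτ1, hτ2, hτ3, hτ4, hτ5]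
  -- coefficients of τ^4
  have hp4 : (τ:PowerSeries F2)^4 = τ^3 * τ := by ring
  have t4_3 : PowerSeries.coeff 3 (τ^4) = 0 := by
    rw [hp4, cmul]
    simp [Finset.sum_range_succ, t3_0, t3_1, t3_2, t3_3, hτ0, hτ1, hτ2, hτ3]
  have t4_4 : PowerSeries.coeff 4 (τ^4) = 1 := by
    rw [hp4, cmul]
    simp [Finset.sum_range_succ, t3_0, t3_1, t3_2, t3_3, t3_4, hτ0, hτ1, hτ2, hτ3, hτ4]
  have t4_5 : PowerSeries.coeff 5 (τ^4) = 0 := by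
    rw [hp4, cmul]
    simp [Finset.sum_range_succ, t3_0, t3_1, t3_2, t3_3, t3_4, t3_5,
      hτ0, hτ1, hτ2, hτ3, hτ4, hτ5]
    try decide
  -- coefficient of τ^5
  have hp5 : (τ:PowerSeries F2)^5 = τ^4 * τ := by ring
  have t5_5 : PowerSeries.coeff 5 (τ^5) = 1 := by
    rw [hp5, cmul]
    have t4_0 : PowerSeries.coeff 0 (τ^4) = 0 := by
      rw [hp4, cmul]; simp [Finset.sum_range_succ, t3_0, hτ0]
    have t4_1 : PowerSeries.coeff 1 (τ^4) = 0 := by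
      rw [hp4, cmul]; simp [Finset.sum_range_succ, t3_0, t3_1, hτ0, hτ1]
    have t4_2 : PowerSeries.coeff 2 (τ^4) = 0 := by
      rw [hp4, cmul]; simp [Finset.sum_range_succ, t3_0, t3_1, t3_2, hτ0, hτ1, hτ2]
    simp [Finset.sum_range_succ, t4_0, t4_1, t4_2, t4_3, t4_4, t4_5,
      hτ0, hτ1, hτ2, hτ3, hτ4, hτ5]
  -- coefficients of ψ^2
  have p2_4 : PowerSeries.coeff 4 (ψ^2) =
      PowerSeries.coeff 2 ψ * PowerSeries.coeff 2 ψ := by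
    rw [pow_two, cmul]
    simp [Finset.sum_range_succ, hψ0, hψ1]
    ring_nf
    rw [show ((2:F2) = 0) by decide]
    ring
  have p2_5 : PowerSeries.coeff 5 (ψ^2) = 0 := by
    rw [pow_two, cmul]
    simp [Finset.sum_range_succ, hψ0, hψ1]
    ring_nf
    rw [show ((2:F2) = 0) by decide]
    ring
  -- the two coefficient equations
  have E4 := congrArg (PowerSeries.coeff 4) hcomp
  have E5 := congrArg (PowerSeries.coeff 5) hcomp
  simp only [ngComp, PowerSeries.coeff_mk, Finset.sum_range_succ, Finset.sum_range_zero,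
    pow_zero, pow_one, zero_add] at E4 E5
  rw [hσ0, hσ1, hσ2, hσ3, hσ4, hψ0, hψ1, p2_4, t2_4, t3_4, t4_4] at E4
  rw [hσ0, hσ1, hσ2, hσ3, hσ4, hσ5, hψ0, hψ1, p2_5, t2_5, t3_5, t4_5, t5_5] at E5
  simp only [PowerSeries.coeff_one] at E4 E5
  norm_num at E4 E5
  rw [hτ4] at E4
  rw [hτ5] at E5
  -- E4 forces coeff 3 ψ = 1, E5 forces coeff 3 ψ = 0
  have key : ∀ x2 x3 x4 : F2,
      x4 + x2 * x2 = 1 + x2 + x3 + x4 → 0 + x3 = 0 → False := by decide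
  exact key _ _ _ E4 E5
end

section
/- Let F(t, X) ∈ F₂[t, X] be a polynomial in two variables over F₂ that is symmetric, i.e., F(t, X) = F(X, t). Let m ≥ 1 be an integer, and suppose there is exactly one power series σ ∈ F₂[[t]] of the form σ = t + t^{m+1} + O(t^{m+2}) satisfying F(t, σ) = 0 (substituting the power series t and σ for the two variables), and that such a σ exists. Then σ ∘ σ = t, i.e., σ is an element of compositional order 2 in 𝒩(F₂). -/
open PowerSeries

section Aux

lemma coeff_pow_zero {τ : PowerSeries F2} (h0 : constantCoeff τ = 0)
    {k n : ℕ} (hk : k < n) : coeff k (τ ^ n) = 0 := by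
  have : (X : PowerSeries F2) ^ n ∣ τ ^ n :=
    pow_dvd_pow_of_dvd (PowerSeries.X_dvd_iff.mpr h0) n
  exact (PowerSeries.X_pow_dvd_iff.mp this) k hk

lemma coeff_pow_congr {α β : PowerSeries F2} (h0 : constantCoeff α = 0)
    (h0' : constantCoeff β = 0) {k : ℕ} (hab : ∀ j < k, coeff j α = coeff j β)
    {n : ℕ} (hn : 2 ≤ n) : coeff k (α ^ n) = coeff k (β ^ n) := by
  have hdvd : (X : PowerSeries F2) ^ ((n - 1) + k) ∣ α ^ n - β ^ n := by
    rw [← geom_sum₂_mul, pow_add]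
    refine mul_dvd_mul (Finset.dvd_sum fun i hi => ?_) ?_
    · have hi' : i ≤ n - 1 := Nat.le_sub_one_of_lt (Finset.mem_range.mp hi)
      have hx : (X : PowerSeries F2) ^ (n-1) = X ^ i * X ^ (n-1-i) := by
        rw [← pow_add, Nat.add_sub_cancel' hi']
      rw [hx]
      exact mul_dvd_mul (pow_dvd_pow_of_dvd (PowerSeries.X_dvd_iff.mpr h0) i)
        (pow_dvd_pow_of_dvd (PowerSeries.X_dvd_iff.mpr h0') _)
    · rw [PowerSeries.X_pow_dvd_iff]
      intro j hj
      rw [map_sub, hab j hj, sub_self]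
  have := (PowerSeries.X_pow_dvd_iff.mp hdvd) k (by omega)
  rw [map_sub, sub_eq_zero] at this
  exact this

lemma coeff_pow_self {α : PowerSeries F2} (h0 : constantCoeff α = 0) :
    ∀ n, coeff n (α ^ n) = (coeff 1 α) ^ n := by
  intro n
  induction n with
  | zero => simp
  | succ n ih =>
    rw [pow_succ, PowerSeries.coeff_mul]
    rw [Finset.sum_eq_single (n, 1)]
    · rw [ih, pow_succ]
    · rintro ⟨i, j⟩ hmem hne
      rw [Finset.HasAntidiagonal.mem_antidiagonal] at hmem
      rcases lt_trichotomy i n with h | h | h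
      · rw [coeff_pow_zero h0 h, zero_mul]
      · exfalso; apply hne; simp only [Prod.mk.injEq]; omega
      · have : j = 0 := by omega
        subst this
        simp [PowerSeries.coeff_zero_eq_constantCoeff, h0]
    · intro hmem
      exfalso; apply hmem; rw [Finset.HasAntidiagonal.mem_antidiagonal]

lemma coeff_eval₂ (P : Polynomial F2) (τ : PowerSeries F2) (k : ℕ) :
    coeff k (P.eval₂ C τ) = ∑ n ∈ P.support, P.coeff n * coeff k (τ ^ n) := by
  rw [Polynomial.eval₂_eq_sum, Polynomial.sum_def, map_sum]
  exact Finset.sum_congr rfl fun n _ => by rw [PowerSeries.coeff_C_mul]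

lemma coeff_eval₂_zero {P : Polynomial F2} {τ : PowerSeries F2}
    (h0 : constantCoeff τ = 0) {k : ℕ} (hP : ∀ n ≤ k, P.coeff n = 0) :
    coeff k (P.eval₂ C τ) = 0 := by
  rw [coeff_eval₂]
  refine Finset.sum_eq_zero fun n hn => ?_
  rcases le_or_gt n k with h | h
  · rw [hP n h, zero_mul]
  · rw [coeff_pow_zero h0 h, mul_zero]

lemma coeff_eval₂_congr {P Q : Polynomial F2} {τ : PowerSeries F2}
    (h0 : constantCoeff τ = 0) {k : ℕ} (hPQ : ∀ n ≤ k, P.coeff n = Q.coeff n) :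
    coeff k (P.eval₂ C τ) = coeff k (Q.eval₂ C τ) := by
  have := coeff_eval₂_zero (P := P - Q) h0 (k := k)
    (fun n hn => by rw [Polynomial.coeff_sub, hPQ n hn, sub_self])
  rw [Polynomial.eval₂_sub, map_sub, sub_eq_zero] at this
  exact this

lemma coeff_ngComp (σ τ : PowerSeries F2) (h0 : constantCoeff τ = 0)
    {k N : ℕ} (hN : k < N) :
    coeff k (ngComp σ τ) = coeff k ((trunc N σ).eval₂ C τ) := by
  have base : coeff k (ngComp σ τ) = coeff k ((trunc (k+1) σ).eval₂ C τ) := by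
    rw [coeff_eval₂, ngComp, PowerSeries.coeff_mk]
    have hsub : (trunc (k+1) σ).support ⊆ Finset.range (k+1) := by
      intro n hn
      rw [Finset.mem_range]
      by_contra hnk
      exact (Polynomial.mem_support_iff.mp hn) (by rw [PowerSeries.coeff_trunc, if_neg hnk])
    rw [Finset.sum_subset hsub (fun n _ hns => by
      rw [Polynomial.notMem_support_iff.mp hns, zero_mul])]
    exact Finset.sum_congr rfl fun n hn => by
      rw [PowerSeries.coeff_trunc, if_pos (Finset.mem_range.mp hn)]
  rw [base]
  exact coeff_eval₂_congr h0 fun n hn => by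
    rw [PowerSeries.coeff_trunc, PowerSeries.coeff_trunc, if_pos (by omega), if_pos (by omega)]

lemma ngComp_add (σ₁ σ₂ τ : PowerSeries F2) :
    ngComp (σ₁ + σ₂) τ = ngComp σ₁ τ + ngComp σ₂ τ := by
  ext k
  simp [ngComp, add_mul, Finset.sum_add_distrib]

lemma ngComp_sub (σ₁ σ₂ τ : PowerSeries F2) :
    ngComp (σ₁ - σ₂) τ = ngComp σ₁ τ - ngComp σ₂ τ := by
  ext k
  simp [ngComp, sub_mul, Finset.sum_sub_distrib]

lemma ngComp_zero (τ : PowerSeries F2) : ngComp 0 τ = 0 := by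
  ext k; simp [ngComp]

lemma ngComp_C (a : F2) (τ : PowerSeries F2) (h0 : constantCoeff τ = 0) :
    ngComp (C a) τ = C a := by
  ext k
  rw [coeff_ngComp _ _ h0 (Nat.lt_succ_self k), PowerSeries.trunc_C, Polynomial.eval₂_C]

lemma ngComp_X (τ : PowerSeries F2) (h0 : constantCoeff τ = 0) :
    ngComp X τ = τ := by
  ext k
  rw [coeff_ngComp _ _ h0 (show k < k + 2 by omega), PowerSeries.trunc_X, Polynomial.eval₂_X]

lemma ngComp_mul (σ₁ σ₂ τ : PowerSeries F2) (h0 : constantCoeff τ = 0) :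
    ngComp (σ₁ * σ₂) τ = ngComp σ₁ τ * ngComp σ₂ τ := by
  ext k
  rw [PowerSeries.coeff_mul]
  have step : ∀ p ∈ Finset.HasAntidiagonal.antidiagonal k,
      coeff p.1 (ngComp σ₁ τ) * coeff p.2 (ngComp σ₂ τ) =
      coeff p.1 ((trunc (k+1) σ₁).eval₂ C τ) *
        coeff p.2 ((trunc (k+1) σ₂).eval₂ C τ) := by
    rintro ⟨i, j⟩ hmem
    rw [Finset.HasAntidiagonal.mem_antidiagonal] at hmem
    rw [coeff_ngComp _ _ h0 (show i < k+1 by omega), coeff_ngComp _ _ h0 (show j < k+1 by omega)]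
  rw [Finset.sum_congr rfl step, ← PowerSeries.coeff_mul, ← Polynomial.eval₂_mul]
  rw [coeff_ngComp _ _ h0 (Nat.lt_succ_self k)]
  refine (coeff_eval₂_congr h0 fun n hn => ?_).symm
  have h1 : (trunc (k+1) σ₁ * trunc (k+1) σ₂).coeff n
      = coeff n ((trunc (k+1) σ₁ : PowerSeries F2) * (trunc (k+1) σ₂ : PowerSeries F2)) := by
    rw [← Polynomial.coe_mul, Polynomial.coeff_coe]
  rw [h1, ← PowerSeries.coeff_coe_trunc_of_lt (show n < k+1 by omega),
    PowerSeries.trunc_trunc_mul_trunc, PowerSeries.coeff_coe_trunc_of_lt (show n < k+1 by omega),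
    PowerSeries.coeff_trunc, if_pos (by omega)]

lemma ngComp_aeval (F : MvPolynomial (Fin 2) F2) (a b τ : PowerSeries F2)
    (h0 : constantCoeff τ = 0) :
    ngComp (MvPolynomial.aeval ![a, b] F) τ =
      MvPolynomial.aeval ![ngComp a τ, ngComp b τ] F := by
  induction F using MvPolynomial.induction_on with
  | C r =>
    rw [MvPolynomial.aeval_C, MvPolynomial.aeval_C]
    exact ngComp_C r τ h0
  | add p q hp hq => rw [map_add, map_add, ngComp_add, hp, hq]
  | mul_X p i hp =>
    rw [map_mul, map_mul, ngComp_mul _ _ _ h0, hp, MvPolynomial.aeval_X, MvPolynomial.aeval_X]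
    congr 1
    fin_cases i
    · simp
    · simp

/-- Coefficients of the right compositional inverse, by strong recursion. -/
noncomputable def invC (σ : PowerSeries F2) : ℕ → F2
  | k => coeff k X - ∑ n ∈ (Finset.range (k + 1)).erase 1,
      coeff n σ *
        coeff k ((PowerSeries.mk fun j => if h : j < k then invC σ j else 0) ^ n)
  termination_by k => k
  decreasing_by exact h

lemma invC_zero {σ : PowerSeries F2} (h0σ : constantCoeff σ = 0) : invC σ 0 = 0 := by
  rw [invC]
  have : (Finset.range 1).erase 1 = {0} := by decide
  simp [this, h0σ]

lemma ngComp_invC {σ : PowerSeries F2} (h0σ : constantCoeff σ = 0)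
    (h1σ : coeff 1 σ = 1) : ngComp σ (PowerSeries.mk (invC σ)) = X := by
  set τ := PowerSeries.mk (invC σ) with hτ
  have h0τ : constantCoeff τ = 0 := by
    rw [hτ, ← PowerSeries.coeff_zero_eq_constantCoeff_apply, PowerSeries.coeff_mk]
    exact invC_zero h0σ
  ext k
  rcases Nat.eq_zero_or_pos k with rfl | hk
  · simp [ngComp, PowerSeries.coeff_zero_eq_constantCoeff, h0σ]
  · set τ' := PowerSeries.mk fun j => if h : j < k then invC σ j else 0 with hτ'
    have h0τ' : constantCoeff τ' = 0 := by
      rw [hτ', ← PowerSeries.coeff_zero_eq_constantCoeff_apply, PowerSeries.coeff_mk]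
      rcases lt_or_ge 0 k with hpos | hpos
      · rw [dif_pos hpos]; exact invC_zero h0σ
      · rw [dif_neg (by omega)]
    have hagree : ∀ j < k, coeff j τ = coeff j τ' := fun j hj => by
      rw [hτ, hτ', PowerSeries.coeff_mk, PowerSeries.coeff_mk, dif_pos hj]
    have key : ∀ n ∈ (Finset.range (k + 1)).erase 1,
        coeff k (τ ^ n) = coeff k (τ' ^ n) := by
      intro n hn
      rcases Nat.eq_zero_or_pos n with rfl | hn0
      · rw [pow_zero, pow_zero]
      · have hn1 : n ≠ 1 := (Finset.mem_erase.mp hn).1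
        exact coeff_pow_congr h0τ h0τ' hagree (by omega)
    have hmem : 1 ∈ Finset.range (k + 1) := Finset.mem_range.mpr (by omega)
    rw [ngComp, PowerSeries.coeff_mk, ← Finset.add_sum_erase _ _ hmem, h1σ, pow_one, one_mul,
      Finset.sum_congr rfl (fun n hn => by rw [key n hn])]
    rw [hτ, PowerSeries.coeff_mk]
    rw [invC]
    rw [sub_add_cancel]

end Aux

theorem statement12 (F : MvPolynomial (Fin 2) F2)
    (hsym : MvPolynomial.rename (Equiv.swap (0 : Fin 2) 1) F = F)
    (m : ℕ) (hm : 1 ≤ m)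
    (h : ∃! σ : PowerSeries F2,
        ((∀ i < m + 1, PowerSeries.coeff i (σ - PowerSeries.X) = 0) ∧
          PowerSeries.coeff (m + 1) (σ - PowerSeries.X) = 1) ∧
        MvPolynomial.aeval ![PowerSeries.X, σ] F = 0) :
    ∀ σ : PowerSeries F2,
      ((∀ i < m + 1, PowerSeries.coeff i (σ - PowerSeries.X) = 0) ∧
          PowerSeries.coeff (m + 1) (σ - PowerSeries.X) = 1) →
      MvPolynomial.aeval ![PowerSeries.X, σ] F = 0 →
      ngComp σ σ = PowerSeries.X := by
  intro σ hform hF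
  obtain ⟨hlow, hm1⟩ := hform
  -- basic coefficients of σ
  have h0σ : constantCoeff σ = 0 := by
    have := hlow 0 (by omega)
    rw [map_sub] at this
    simpa [PowerSeries.coeff_zero_eq_constantCoeff] using this
  have h1σ : coeff 1 σ = 1 := by
    have := hlow 1 (by omega)
    rw [map_sub, sub_eq_zero] at this
    rw [this]
    simp
  -- the right compositional inverse τ
  set τ := PowerSeries.mk (invC σ) with hτdef
  have hcomp : ngComp σ τ = X := ngComp_invC h0σ h1σ
  have h0τ : constantCoeff τ = 0 := by
    rw [hτdef, ← PowerSeries.coeff_zero_eq_constantCoeff_apply, PowerSeries.coeff_mk]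
    exact invC_zero h0σ
  -- τ - X = - ngComp (σ - X) τ
  have hτX : τ - X = - ngComp (σ - X) τ := by
    rw [ngComp_sub, hcomp, ngComp_X τ h0τ]
    ring
  -- coefficients of ngComp (σ - X) τ
  have hρ : ∀ i : ℕ, coeff i (ngComp (σ - X) τ)
      = ∑ n ∈ Finset.range (i + 1), coeff n (σ - X) * coeff i (τ ^ n) := fun i => by
    rw [ngComp, PowerSeries.coeff_mk]
  have hτlow : ∀ i < m + 1, coeff i (τ - X) = 0 := by
    intro i hi
    rw [hτX, map_neg, hρ, Finset.sum_eq_zero, neg_zero]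
    intro n hn
    rw [hlow n (by rw [Finset.mem_range] at hn; omega), zero_mul]
  have h1τ : coeff 1 τ = 1 := by
    have := hτlow 1 (by omega)
    rw [map_sub, sub_eq_zero] at this
    rw [this]; simp
  have hτm1 : coeff (m + 1) (τ - X) = 1 := by
    rw [hτX, map_neg, hρ, Finset.sum_range_succ, Finset.sum_eq_zero
      (fun n hn => by rw [hlow n (Finset.mem_range.mp hn), zero_mul]), zero_add, hm1,
      coeff_pow_self h0τ, h1τ, one_pow, one_mul]
    decide
  -- τ satisfies the polynomial equation
  have hFswap : MvPolynomial.aeval ![σ, PowerSeries.X] F = 0 := by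
    have hcomp2 : (![σ, PowerSeries.X] : Fin 2 → PowerSeries F2) ∘ (Equiv.swap (0 : Fin 2) 1)
        = ![PowerSeries.X, σ] := by
      funext i
      fin_cases i <;> simp
    calc MvPolynomial.aeval ![σ, PowerSeries.X] F
        = MvPolynomial.aeval ![σ, PowerSeries.X] (MvPolynomial.rename (Equiv.swap (0:Fin 2) 1) F) := by
          rw [hsym]
      _ = MvPolynomial.aeval (![σ, PowerSeries.X] ∘ (Equiv.swap (0:Fin 2) 1)) F := by
          rw [MvPolynomial.aeval_rename]
      _ = 0 := by rw [hcomp2, hF]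
  have hFτ : MvPolynomial.aeval ![PowerSeries.X, τ] F = 0 := by
    have := ngComp_aeval F σ PowerSeries.X τ h0τ
    rw [hFswap, ngComp_zero, hcomp, ngComp_X τ h0τ] at this
    exact this.symm
  -- uniqueness
  obtain ⟨σ₀, _, huniq⟩ := h
  have e1 : τ = σ₀ := huniq τ ⟨⟨hτlow, hτm1⟩, hFτ⟩
  have e2 : σ = σ₀ := huniq σ ⟨⟨hlow, hm1⟩, hF⟩
  rw [show σ = τ from e2.trans e1.symm] at hcomp ⊢
  exact hcomp
end

section
/- The power series σ_{S,1} := t + Σ_{k≥2} (t^{2^k−2} + t^{2^k−1}) ∈ F₂[[t]] belongs to 𝒩(F₂), has compositional order 2 (σ_{S,1} ∘ σ_{S,1} = t, σ_{S,1} ≠ t) and depth 1, it is 1-sparse, and every element of 𝒩(F₂) of compositional order 2 and depth 1 is conjugate in 𝒩(F₂) to σ_{S,1}. -/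
open PowerSeries

/-- `ngIter σ n = σ^{∘n}`, the `n`-fold compositional iterate. -/
noncomputable def ngIter (σ : PowerSeries F2) : ℕ → PowerSeries F2
  | 0 => PowerSeries.X
  | n + 1 => ngComp σ (ngIter σ n)

/-- `σ` has compositional order `n`. -/
def NGOrder (σ : PowerSeries F2) (n : ℕ) : Prop :=
  ngIter σ n = PowerSeries.X ∧ ∀ m : ℕ, 0 < m → m < n → ngIter σ m ≠ PowerSeries.X

/-- `σ` has depth `m`, i.e. `ord_t (σ - t) = m + 1`. -/
def HasDepth (σ : PowerSeries F2) (m : ℕ) : Prop :=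
  (∀ i < m + 1, PowerSeries.coeff i (σ - PowerSeries.X) = 0) ∧
    PowerSeries.coeff (m + 1) (σ - PowerSeries.X) ≠ 0

/-- Conjugacy in the Nottingham group. -/
def NGConj (σ τ : PowerSeries F2) : Prop :=
  ∃ ψ : PowerSeries F2, IsNott ψ ∧ ngComp σ ψ = ngComp ψ τ

/-- `σ` is `r`-sparse: the number of nonzero coefficients among the first `N` grows
like `O((log N)^r)`. -/
def IsSparse (r : ℕ) (σ : PowerSeries F2) : Prop :=
  ∃ C : ℝ, 0 < C ∧ ∀ N : ℕ, 2 ≤ N →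
    (((Finset.range (N + 1)).filter fun k => PowerSeries.coeff k σ ≠ 0).card : ℝ) ≤
      C * Real.log N ^ r

/- The sparse series `σ_{S,1} = t + Σ_{k≥2} (t^{2^k−2} + t^{2^k−1})`. -/
open Classical in
noncomputable def sigmaS1 : PowerSeries F2 :=
  PowerSeries.mk fun n =>
    if n = 1 ∨ ∃ k : ℕ, 2 ≤ k ∧ (n = 2 ^ k - 2 ∨ n = 2 ^ k - 1) then 1 else 0


namespace NG

local notation "R" => PowerSeries F2

instance : CharP R 2 := by
  constructor
  intro n
  rw [show ((n : ℕ) : R) = C (n : F2) from (map_natCast (C) n).symm]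
  constructor
  · intro h
    have h3 : (n : F2) = 0 := by
      have := congrArg (constantCoeff) h
      simpa using this
    exact (ZMod.natCast_eq_zero_iff n 2).mp h3
  · intro h
    have h3 : (n : F2) = 0 := (ZMod.natCast_eq_zero_iff n 2).mpr h
    rw [h3, map_zero]

lemma two_eq_zero : (2 : R) = 0 := by
  have := CharP.cast_eq_zero R 2
  exact_mod_cast this

lemma F2_two_eq_zero : (2 : F2) = 0 := by decide

lemma F2_cancel {a b : F2} (h : a + b = 0) : a = b := by revert h; revert a b; decide

lemma coeff_ngComp (σ τ : R) (k : ℕ) :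
    coeff k (ngComp σ τ) =
      ∑ n ∈ Finset.range (k + 1), coeff n σ * coeff k (τ ^ n) := by
  simp [ngComp]

lemma coeff_pow_eq_zero {τ : R} (hτ : constantCoeff τ = 0) {k n : ℕ} (h : k < n) :
    coeff k (τ ^ n) = 0 := by
  obtain ⟨u, hu⟩ := PowerSeries.X_dvd_iff.mpr hτ
  rw [hu, mul_pow, PowerSeries.coeff_mul]
  refine Finset.sum_eq_zero fun p hp => ?_
  rw [Finset.HasAntidiagonal.mem_antidiagonal] at hp
  rw [PowerSeries.coeff_X_pow, if_neg (by omega), zero_mul]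

lemma coeff_ngComp' {τ : R} (hτ : constantCoeff τ = 0) (σ : R) {k m : ℕ} (hm : k < m) :
    coeff k (ngComp σ τ) =
      ∑ n ∈ Finset.range m, coeff n σ * coeff k (τ ^ n) := by
  rw [coeff_ngComp]
  refine Finset.sum_subset (by intro x hx; simp at *; omega) ?_
  intro x hx hx2
  simp only [Finset.mem_range] at hx hx2
  rw [coeff_pow_eq_zero hτ (by omega), mul_zero]

lemma ngComp_add_left (A B τ : R) : ngComp (A + B) τ = ngComp A τ + ngComp B τ := by
  ext k
  simp [ngComp, add_mul, Finset.sum_add_distrib]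

lemma ngComp_one_left (τ : R) : ngComp 1 τ = 1 := by
  ext k
  rw [coeff_ngComp]
  rw [Finset.sum_eq_single 0]
  · simp
  · intro n hn hn0
    simp [PowerSeries.coeff_one, hn0]
  · simp

lemma ngComp_X_left {τ : R} (hτ : constantCoeff τ = 0) : ngComp X τ = τ := by
  ext k
  rw [coeff_ngComp]
  rcases Nat.eq_zero_or_pos k with hk | hk
  · subst hk
    simp [PowerSeries.coeff_X]
    simpa [PowerSeries.coeff_zero_eq_constantCoeff] using hτ.symm
  · rw [Finset.sum_eq_single 1]
    · simp [PowerSeries.coeff_X]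
    · intro n hn hn1
      simp [PowerSeries.coeff_X, hn1]
    · intro h
      simp at h
      omega

lemma ngComp_X_right (σ : R) : ngComp σ X = σ := by
  ext k
  rw [coeff_ngComp]
  rw [Finset.sum_eq_single k]
  · simp [PowerSeries.coeff_X_pow]
  · intro n hn hnk
    rw [PowerSeries.coeff_X_pow, if_neg (fun h => hnk h.symm), mul_zero]
  · intro h
    simp at h

lemma constantCoeff_ngComp (σ τ : R) : coeff 0 (ngComp σ τ) = coeff 0 σ := by
  rw [coeff_ngComp]
  simp

lemma coeff_one_ngComp (σ τ : R) : coeff 1 (ngComp σ τ) = coeff 1 σ * coeff 1 τ := by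
  rw [coeff_ngComp]
  rw [Finset.sum_range_succ, Finset.sum_range_one]
  simp [PowerSeries.coeff_one]


lemma ngComp_mul {τ : R} (hτ : constantCoeff τ = 0) (A B : R) :
    ngComp (A * B) τ = ngComp A τ * ngComp B τ := by
  ext k
  set F : ℕ × ℕ → F2 := fun pq =>
    coeff pq.1 A * coeff pq.2 B * coeff k (τ ^ (pq.1 + pq.2)) with hF
  set T := (Finset.range (2*k+2) ×ˢ Finset.range (2*k+2)).filter
    (fun pq : ℕ × ℕ => pq.1 + pq.2 < 2*k+2) with hT
  -- LHS
  have hL : coeff k (ngComp (A * B) τ)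
      = ∑ pq ∈ Finset.range (k+1) ×ˢ Finset.range (k+1), F pq := by
    rw [coeff_ngComp' hτ _ (show k < 2*k+2 by omega)]
    have e1 : ∀ n ∈ Finset.range (2*k+2), coeff n (A*B) * coeff k (τ ^ n)
        = ∑ pq ∈ Finset.HasAntidiagonal.antidiagonal n, F pq := by
      intro n _
      rw [PowerSeries.coeff_mul, Finset.sum_mul]
      refine Finset.sum_congr rfl fun pq hpq => ?_
      rw [Finset.HasAntidiagonal.mem_antidiagonal] at hpq
      simp [hF, hpq]
    rw [Finset.sum_congr rfl e1, Finset.sum_sigma']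
    have step1 : ∑ x ∈ (Finset.range (2*k+2)).sigma (fun n => Finset.HasAntidiagonal.antidiagonal n), F x.2
        = ∑ pq ∈ T, F pq := by
      refine Finset.sum_nbij' (fun x => x.2) (fun pq => ⟨pq.1 + pq.2, pq⟩) ?_ ?_ ?_ ?_ ?_
      · intro x hx
        simp only [Finset.mem_sigma, Finset.mem_range, Finset.HasAntidiagonal.mem_antidiagonal] at hx
        simp only [hT, Finset.mem_filter, Finset.mem_product, Finset.mem_range]
        refine ⟨⟨by omega, by omega⟩, by omega⟩
      · intro pq hpq
        simp only [hT, Finset.mem_filter, Finset.mem_product, Finset.mem_range] at hpq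
        exact Finset.mem_sigma.mpr ⟨Finset.mem_range.mpr (show pq.1 + pq.2 < 2*k+2 by omega),
          Finset.HasAntidiagonal.mem_antidiagonal.mpr rfl⟩
      · rintro ⟨n, pq⟩ hx
        simp only [Finset.mem_sigma, Finset.mem_range, Finset.HasAntidiagonal.mem_antidiagonal] at hx
        obtain ⟨h1, h2⟩ := hx
        subst h2
        rfl
      · intro pq hpq
        rfl
      · intro x hx
        rfl
    rw [step1]
    refine (Finset.sum_subset ?_ ?_).symm
    · intro pq hpq
      simp only [Finset.mem_product, Finset.mem_range] at hpq
      simp only [hT, Finset.mem_filter, Finset.mem_product, Finset.mem_range]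
      refine ⟨⟨by omega, by omega⟩, by omega⟩
    · intro pq hpq hpq2
      simp only [hT, Finset.mem_filter, Finset.mem_product, Finset.mem_range] at hpq
      simp only [Finset.mem_product, Finset.mem_range] at hpq2
      have : k < pq.1 + pq.2 := by omega
      simp only [hF, coeff_pow_eq_zero hτ this, mul_zero]
  -- RHS
  have hR : coeff k (ngComp A τ * ngComp B τ)
      = ∑ p ∈ Finset.range (k+1), ∑ q ∈ Finset.range (k+1), F (p, q) := by
    rw [PowerSeries.coeff_mul]
    have e1 : ∀ ij ∈ Finset.HasAntidiagonal.antidiagonal k,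
        coeff ij.1 (ngComp A τ) * coeff ij.2 (ngComp B τ)
        = ∑ p ∈ Finset.range (k+1), ∑ q ∈ Finset.range (k+1),
            (coeff p A * coeff q B) *
              (coeff ij.1 (τ ^ p) * coeff ij.2 (τ ^ q)) := by
      intro ij hij
      rw [Finset.HasAntidiagonal.mem_antidiagonal] at hij
      rw [coeff_ngComp' hτ A (show ij.1 < k+1 by omega),
          coeff_ngComp' hτ B (show ij.2 < k+1 by omega),
          Finset.sum_mul_sum]
      refine Finset.sum_congr rfl fun p _ => Finset.sum_congr rfl fun q _ => by ring
    rw [Finset.sum_congr rfl e1, Finset.sum_comm]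
    refine Finset.sum_congr rfl fun p _ => ?_
    rw [Finset.sum_comm]
    refine Finset.sum_congr rfl fun q _ => ?_
    rw [← Finset.mul_sum]
    have : ∑ ij ∈ Finset.HasAntidiagonal.antidiagonal k, coeff ij.1 (τ ^ p) * coeff ij.2 (τ ^ q)
        = coeff k (τ ^ (p + q)) := by
      rw [pow_add, PowerSeries.coeff_mul]
    rw [this]
  rw [hL, hR, Finset.sum_product]

lemma ngComp_pow {τ : R} (hτ : constantCoeff τ = 0) (A : R) (m : ℕ) :
    ngComp (A ^ m) τ = (ngComp A τ) ^ m := by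
  induction m with
  | zero => simpa using ngComp_one_left τ
  | succ m ih => rw [pow_succ, pow_succ, ngComp_mul hτ, ih]

lemma ngComp_assoc {τ ρ : R} (σ : R) (hτ : constantCoeff τ = 0)
    (hρ : constantCoeff ρ = 0) :
    ngComp (ngComp σ τ) ρ = ngComp σ (ngComp τ ρ) := by
  have hc : constantCoeff (ngComp τ ρ) = 0 := by
    have := constantCoeff_ngComp τ ρ
    simp only [PowerSeries.coeff_zero_eq_constantCoeff] at this ⊢
    rw [this, hτ]
  ext k
  rw [coeff_ngComp' hρ _ (Nat.lt_succ_self k), coeff_ngComp' hc _ (Nat.lt_succ_self k)]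
  have e1 : ∀ n ∈ Finset.range (k+1), coeff n (ngComp σ τ) * coeff k (ρ ^ n)
      = ∑ m ∈ Finset.range (k+1), coeff m σ * (coeff n (τ ^ m) * coeff k (ρ ^ n)) := by
    intro n hn
    simp only [Finset.mem_range] at hn
    rw [coeff_ngComp' hτ σ (show n < k+1 by omega), Finset.sum_mul]
    refine Finset.sum_congr rfl fun m _ => by ring
  rw [Finset.sum_congr rfl e1, Finset.sum_comm]
  refine Finset.sum_congr rfl fun m _ => ?_
  rw [← Finset.mul_sum]
  congr 1
  rw [← ngComp_pow hρ τ m, coeff_ngComp' hρ _ (Nat.lt_succ_self k)]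

-- vanishing of low coefficients of products
lemma coeff_mul_eq_zero {u v : R} {a b : ℕ} (hu : ∀ j < a, coeff j u = 0)
    (hv : ∀ j < b, coeff j v = 0) {i : ℕ} (hi : i < a + b) :
    coeff i (u * v) = 0 := by
  rw [PowerSeries.coeff_mul]
  refine Finset.sum_eq_zero fun pq hpq => ?_
  rw [Finset.HasAntidiagonal.mem_antidiagonal] at hpq
  rcases Nat.lt_or_ge pq.1 a with h | h
  · rw [hu _ h, zero_mul]
  · rw [hv _ (by omega), mul_zero]

lemma coeff_pow_low_eq_zero {A : R} (hA : constantCoeff A = 0) {m i : ℕ} (h : i < m) :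
    coeff i (A ^ m) = 0 := coeff_pow_eq_zero hA h

/-- binomial approximation: `(A+B)^m ≡ A^m + [m=1] B` below degree `n+2`. -/
lemma pow_add_approx {A B : R} (hA : constantCoeff A = 0) {n : ℕ} (hn : 2 ≤ n)
    (hB : ∀ i < n, coeff i B = 0) (m : ℕ) {i : ℕ} (hi : i < n + 2) :
    coeff i ((A + B) ^ m) = coeff i (A ^ m) + (if m = 1 then coeff i B else 0) := by
  have hA0 : ∀ j < 1, coeff j A = 0 := by
    intro j hj
    interval_cases j
    simpa using hA
  rw [add_pow, map_sum]
  rw [Finset.sum_range_succ]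
  have hlast : coeff i (A ^ m * B ^ (m - m) * ((m.choose m : ℕ) : R)) = coeff i (A ^ m) := by
    simp
  rw [hlast]
  have hrest : ∑ j ∈ Finset.range m, coeff i (A ^ j * B ^ (m - j) * ((m.choose j : ℕ) : R))
      = (if m = 1 then coeff i B else 0) := by
    rcases Nat.lt_or_ge m 2 with hm | hm
    · interval_cases m
      · simp
      · simp [Finset.sum_range_one]
    · rw [if_neg (by omega)]
      refine Finset.sum_eq_zero fun j hj => ?_
      rw [Finset.mem_range] at hj
      rcases Nat.lt_or_ge j (m - 1) with hj2 | hj2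
      · -- m - j ≥ 2 : B^(m-j) kills everything below 2n ≥ n+2
        have h2 : 2 ≤ m - j := by omega
        have hBB : ∀ l, l < 2 * n → coeff l (B ^ (m - j)) = 0 := by
          intro l hl
          have hsplit : B ^ (m - j) = (B * B) * B ^ (m - j - 2) := by
            rw [← pow_two, ← pow_add]
            congr 1
            omega
          rw [hsplit]
          exact coeff_mul_eq_zero (a := 2*n) (b := 0)
            (fun l' hl' => coeff_mul_eq_zero hB hB (by omega))
            (fun j' hj' => absurd hj' (by omega)) (by omega)
        have hterm : ∀ l < n + 2, coeff l (A ^ j * B ^ (m-j)) = 0 := by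
          intro l hl
          exact coeff_mul_eq_zero (a := 0) (b := n+2) (fun j' hj' => absurd hj' (by omega))
            (fun l' hl' => hBB l' (by omega)) (by omega)
        exact coeff_mul_eq_zero (a := n+2) (b := 0) hterm
          (fun j' hj' => absurd hj' (by omega)) (by omega)
      · -- j = m - 1
        have hj3 : j = m - 1 := by omega
        subst hj3
        have hchoose : m.choose (m - 1) = m := by
          rw [show m - 1 = m - 1 from rfl, Nat.choose_symm (show 1 ≤ m by omega),
            Nat.choose_one_right]
        rcases Nat.even_or_odd m with he | ho
        · have hz : ((m.choose (m-1) : ℕ) : R) = 0 := by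
            rw [hchoose]
            exact (CharP.cast_eq_zero_iff R 2 m).mpr he.two_dvd
          rw [hz, mul_zero, map_zero]
        · -- m odd ≥ 3 : A^(m-1) has order ≥ 2
          have hm3 : 3 ≤ m := by
            rcases ho with ⟨l, hl⟩
            omega
          have hmm : m - (m - 1) = 1 := by omega
          rw [hmm, pow_one]
          have h1 : ∀ l < n + 2, coeff l (A ^ (m-1) * B) = 0 := by
            intro l hl
            exact coeff_mul_eq_zero (a := 2) (b := n)
              (fun l' hl' => coeff_pow_eq_zero hA (by omega)) hB (by omega)
          exact coeff_mul_eq_zero (a := n+2) (b := 0) h1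
            (fun j' hj' => absurd hj' (by omega)) (by omega)
  rw [hrest]
  ring

/-- first-order approximation of composition. -/
lemma ngComp_add_right_approx {σ A B : R} (hσ1 : coeff 1 σ = 1)
    (hA : constantCoeff A = 0) {n : ℕ} (hn : 2 ≤ n)
    (hB : ∀ i < n, coeff i B = 0) {i : ℕ} (hi : i < n + 2) :
    coeff i (ngComp σ (A + B)) = coeff i (ngComp σ A) + coeff i B := by
  rw [coeff_ngComp, coeff_ngComp]
  have e1 : ∀ m ∈ Finset.range (i+1), coeff m σ * coeff i ((A+B)^m)
      = coeff m σ * coeff i (A^m) + (if m = 1 then coeff i B else 0) := by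
    intro m hm
    rw [pow_add_approx hA hn hB m hi, mul_add]
    congr 1
    rcases eq_or_ne m 1 with h1 | h1
    · subst h1
      simp [hσ1]
    · simp [h1]
  rw [Finset.sum_congr rfl e1, Finset.sum_add_distrib,
    Finset.sum_ite_eq' (Finset.range (i+1)) 1 (fun _ => coeff i B)]
  congr 1
  rcases Nat.eq_zero_or_pos i with h0 | h0
  · subst h0
    rw [if_neg (by simp), hB 0 (by omega)]
  · rw [if_pos (Finset.mem_range.mpr (by omega))]

/-- coefficients of powers of a Nottingham series -/
lemma coeff_pow_self {τ : R} (hτ0 : coeff 0 τ = 0) (hτ1 : coeff 1 τ = 1) (m : ℕ) :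
    coeff m (τ ^ m) = 1 := by
  induction m with
  | zero => simp
  | succ m ih =>
    rw [pow_succ, PowerSeries.coeff_mul, Finset.Nat.sum_antidiagonal_eq_sum_range_succ_mk]
    rw [Finset.sum_range_succ, Finset.sum_range_succ]
    have h1 : ∑ p ∈ Finset.range m, coeff p (τ ^ m) * coeff (m + 1 - p) τ = 0 := by
      refine Finset.sum_eq_zero fun p hp => ?_
      rw [Finset.mem_range] at hp
      rw [coeff_pow_eq_zero (by simpa using hτ0) hp, zero_mul]
    rw [h1, ih]
    have e1 : m + 1 - m = 1 := by omega
    have e0 : m + 1 - (m+1) = 0 := by omega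
    rw [e1, e0, hτ0, hτ1]
    ring

lemma coeff_pow_succ_self {τ : R} (hτ0 : coeff 0 τ = 0) (hτ1 : coeff 1 τ = 1) (m : ℕ) :
    coeff (m + 1) (τ ^ m) = (m : F2) * coeff 2 τ := by
  induction m with
  | zero => simp
  | succ m ih =>
    rw [pow_succ, PowerSeries.coeff_mul, Finset.Nat.sum_antidiagonal_eq_sum_range_succ_mk]
    rw [Finset.sum_range_succ, Finset.sum_range_succ, Finset.sum_range_succ]
    have h1 : ∑ p ∈ Finset.range m, coeff p (τ ^ m) * coeff (m + 2 - p) τ = 0 := by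
      refine Finset.sum_eq_zero fun p hp => ?_
      rw [Finset.mem_range] at hp
      rw [coeff_pow_eq_zero (by simpa using hτ0) hp, zero_mul]
    rw [h1, ih, coeff_pow_self hτ0 hτ1]
    have e2 : m + 2 - m = 2 := by omega
    have e1 : m + 2 - (m+1) = 1 := by omega
    have e0 : m + 2 - (m+2) = 0 := by omega
    rw [e2, e1, e0, hτ0, hτ1]
    push_cast
    ring

lemma cc0 (f : R) : constantCoeff f = coeff 0 f := by
  rw [PowerSeries.coeff_zero_eq_constantCoeff]

/-! ### The recursively constructed conjugating series -/

noncomputable def nval (σ τ : R) (N : ℕ) (f : ℕ → F2) : F2 :=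
  if N = 1 then 1
  else if 3 ≤ N ∧ N % 2 = 1 then
    coeff (N+1) (ngComp σ (PowerSeries.mk fun j => if j < N then f j else 0)
      + ngComp (PowerSeries.mk fun j => if j < N then f j else 0) τ)
  else 0

noncomputable def cs (σ τ : R) : ℕ → ℕ → F2
  | 0 => fun _ => 0
  | N+1 => fun j => if j = N then nval σ τ N (cs σ τ N) else cs σ τ N j

noncomputable def cf (σ τ : R) (n : ℕ) : F2 := cs σ τ (n+1) n

noncomputable def psiF (σ τ : R) : R := PowerSeries.mk (cf σ τ)

noncomputable def psiT (σ τ : R) (N : ℕ) : R :=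
  PowerSeries.mk fun j => if j < N then cf σ τ j else 0

lemma cs_stab (σ τ : R) : ∀ N j, j < N → cs σ τ N j = cf σ τ j := by
  intro N
  induction N with
  | zero => omega
  | succ N ih =>
    intro j hj
    rcases eq_or_ne j N with h | h
    · subst h
      rfl
    · have h2 : cs σ τ (N+1) j = cs σ τ N j := by simp [cs, h]
      rw [h2, ih j (by omega)]

lemma cf_eq (σ τ : R) (n : ℕ) : cf σ τ n = nval σ τ n (cf σ τ) := by
  have h1 : cf σ τ n = nval σ τ n (cs σ τ n) := by simp [cf, cs]
  rw [h1]
  have hmk : (PowerSeries.mk fun j => if j < n then cs σ τ n j else 0)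
      = (PowerSeries.mk fun j => if j < n then cf σ τ j else 0) := by
    ext j
    simp only [PowerSeries.coeff_mk]
    by_cases h : j < n
    · simp [h, cs_stab σ τ n j h]
    · simp [h]
  simp only [nval, hmk]

lemma cf_zero (σ τ : R) : cf σ τ 0 = 0 := by
  rw [cf_eq]
  simp [nval]

lemma cf_one (σ τ : R) : cf σ τ 1 = 1 := by
  rw [cf_eq]
  simp [nval]

lemma cf_even (σ τ : R) {n : ℕ} (h : n % 2 = 0) : cf σ τ n = 0 := by
  rw [cf_eq]
  simp only [nval]
  rw [if_neg (by omega), if_neg (by omega)]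

lemma cf_odd (σ τ : R) {n : ℕ} (h3 : 3 ≤ n) (h : n % 2 = 1) :
    cf σ τ n = coeff (n+1) (ngComp σ (psiT σ τ n) + ngComp (psiT σ τ n) τ) := by
  rw [cf_eq]
  simp only [nval, psiT]
  rw [if_neg (by omega), if_pos ⟨h3, h⟩]

lemma coeff_psiF (σ τ : R) (n : ℕ) : coeff n (psiF σ τ) = cf σ τ n := by
  simp [psiF]

lemma coeff_psiT (σ τ : R) (N n : ℕ) :
    coeff n (psiT σ τ N) = if n < N then cf σ τ n else 0 := by
  simp [psiT]

/-! ### The obstruction lemma: odd coefficients vanish automatically -/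

lemma obstruction {σ τ ψ : R} (hσ0 : coeff 0 σ = 0) (hσ1 : coeff 1 σ = 1)
    (hτ0 : coeff 0 τ = 0) (hτ1 : coeff 1 τ = 1) (hτ2 : coeff 2 τ = 1)
    (hψ0 : coeff 0 ψ = 0)
    (hσinv : ngComp σ σ = X) (hτinv : ngComp τ τ = X)
    {n : ℕ} (hn3 : 3 ≤ n) (hodd : n % 2 = 1)
    (hlow : ∀ i < n, coeff i (ngComp σ ψ + ngComp ψ τ) = 0) :
    coeff n (ngComp σ ψ + ngComp ψ τ) = 0 := by
  have hσ0' : constantCoeff σ = 0 := by rw [cc0]; exact hσ0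
  have hτ0' : constantCoeff τ = 0 := by rw [cc0]; exact hτ0
  have hψ0' : constantCoeff ψ = 0 := by rw [cc0]; exact hψ0
  set G : R := ngComp σ ψ + ngComp ψ τ with hGdef
  have h2R : (2 : R) = 0 := by
    have := CharP.cast_eq_zero R 2
    exact_mod_cast this
  have hG : ngComp σ ψ = ngComp ψ τ + G := by
    rw [hGdef]
    linear_combination (-(ngComp ψ τ)) * h2R
  have hψτ0 : constantCoeff (ngComp ψ τ) = 0 := by
    rw [cc0, constantCoeff_ngComp, hψ0]
  have e1 : ngComp σ (ngComp σ ψ) = ψ := by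
    rw [← ngComp_assoc σ hσ0' hψ0', hσinv, ngComp_X_left hψ0']
  have e2 : ngComp σ (ngComp ψ τ) = ψ + ngComp G τ := by
    have a1 : ngComp σ (ngComp ψ τ) = ngComp (ngComp σ ψ) τ :=
      (ngComp_assoc σ hψ0' hτ0').symm
    rw [a1, hG, ngComp_add_left]
    rw [ngComp_assoc ψ hτ0' hτ0', hτinv, ngComp_X_right]
  have key : ∀ i < n + 2, coeff i (ngComp G τ) = coeff i G := by
    intro i hi
    have c1 : coeff i ψ
        = coeff i ψ + coeff i (ngComp G τ) + coeff i G := by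
      conv_lhs => rw [← e1, hG]
      rw [ngComp_add_right_approx hσ1 hψτ0 (by omega : 2 ≤ n) hlow hi, e2, map_add]
    have c2 : coeff i (ngComp G τ) + coeff i G = 0 := by
      have h := c1
      rw [add_assoc] at h
      exact add_eq_left.mp h.symm
    exact F2_cancel c2
  have hnF2 : ((n : ℕ) : F2) = 1 := by
    have := ZMod.natCast_mod n 2
    rw [← this, hodd]
    rfl
  have hcalc := key (n+1) (by omega)
  rw [coeff_ngComp, Finset.sum_range_succ, Finset.sum_range_succ] at hcalc
  have hrest : ∑ m ∈ Finset.range n, coeff m G * coeff (n+1) (τ ^ m) = 0 := by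
    refine Finset.sum_eq_zero fun m hm => ?_
    rw [Finset.mem_range] at hm
    rw [hlow m hm, zero_mul]
  rw [hrest, coeff_pow_self hτ0 hτ1, coeff_pow_succ_self hτ0 hτ1, hnF2, hτ2] at hcalc
  -- hcalc : 0 + G_n * (1 * 1) + G_{n+1} * 1 = G_{n+1}
  have : coeff n G + coeff (n+1) G = coeff (n+1) G := by
    calc coeff n G + coeff (n+1) G
        = 0 + coeff n G * (1 * 1) + coeff (n+1) G * 1 := by ring
      _ = coeff (n+1) G := hcalc
  have h4 : coeff n G + coeff (n+1) G = 0 + coeff (n+1) G := by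
    rw [this, zero_add]
  exact add_right_cancel h4

/-! ### The even step: coefficients chosen by recursion kill even-degree terms -/

lemma evenstep {σ τ : R} (hσ1 : coeff 1 σ = 1)
    (hτ0 : coeff 0 τ = 0) (hτ1 : coeff 1 τ = 1) (hτ2 : coeff 2 τ = 1)
    {m : ℕ} (h3 : 3 ≤ m) (hodd : m % 2 = 1) :
    coeff (m+1) (ngComp σ (psiF σ τ) + ngComp (psiF σ τ) τ) = 0 := by
  have hτ0' : constantCoeff τ = 0 := by rw [cc0]; exact hτ0
  set Δ : R := PowerSeries.mk (fun j => if j < m then 0 else cf σ τ j) with hΔdef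
  have hΔ : ∀ j, coeff j Δ = if j < m then 0 else cf σ τ j := by
    intro j; simp [hΔdef]
  have hΔlow : ∀ i < m, coeff i Δ = 0 := by
    intro i hi; rw [hΔ, if_pos hi]
  have hsplit : psiF σ τ = psiT σ τ m + Δ := by
    ext j
    rw [map_add, coeff_psiF, coeff_psiT, hΔ]
    by_cases h : j < m <;> simp [h]
  have hT0 : constantCoeff (psiT σ τ m) = 0 := by
    rw [cc0, coeff_psiT, if_pos (by omega), cf_zero]
  -- left side
  have hleft : coeff (m+1) (ngComp σ (psiF σ τ))
      = coeff (m+1) (ngComp σ (psiT σ τ m)) + cf σ τ (m+1) := by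
    rw [hsplit, ngComp_add_right_approx hσ1 hT0 (show 2 ≤ m by omega) hΔlow
      (show m+1 < m+2 by omega)]
    rw [hΔ, if_neg (by omega)]
  -- right side
  have hmF2 : ((m : ℕ) : F2) = 1 := by
    have := ZMod.natCast_mod m 2
    rw [← this, hodd]
    rfl
  have hΔτ : coeff (m+1) (ngComp Δ τ) = cf σ τ m + cf σ τ (m+1) := by
    rw [coeff_ngComp, Finset.sum_range_succ, Finset.sum_range_succ]
    have hrest : ∑ j ∈ Finset.range m, coeff j Δ * coeff (m+1) (τ ^ j) = 0 := by
      refine Finset.sum_eq_zero fun j hj => ?_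
      rw [Finset.mem_range] at hj
      rw [hΔlow j hj, zero_mul]
    rw [hrest, coeff_pow_self hτ0 hτ1, coeff_pow_succ_self hτ0 hτ1, hmF2, hτ2]
    rw [hΔ, hΔ, if_neg (by omega), if_neg (by omega)]
    ring
  have hright : coeff (m+1) (ngComp (psiF σ τ) τ)
      = coeff (m+1) (ngComp (psiT σ τ m) τ) + cf σ τ m + cf σ τ (m+1) := by
    rw [hsplit, ngComp_add_left, map_add, hΔτ]
    ring
  rw [map_add, hleft, hright]
  have hdef := cf_odd σ τ h3 hodd
  rw [map_add] at hdef
  have h2F : (2 : F2) = 0 := by decide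
  linear_combination hdef + (coeff (m + 1) (ngComp σ (psiT σ τ m))
    + coeff (m + 1) (ngComp (psiT σ τ m) τ) + cf σ τ (m+1)) * h2F

/-! ### Main conjugacy construction -/

theorem conjugate {σ τ : R} (hσ0 : coeff 0 σ = 0) (hσ1 : coeff 1 σ = 1)
    (hσ2 : coeff 2 σ = 1) (hσinv : ngComp σ σ = X)
    (hτ0 : coeff 0 τ = 0) (hτ1 : coeff 1 τ = 1) (hτ2 : coeff 2 τ = 1)
    (hτinv : ngComp τ τ = X) :
    ∃ ψ : R, (coeff 0 ψ = 0 ∧ coeff 1 ψ = 1) ∧ ngComp σ ψ = ngComp ψ τ := by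
  set ψ : R := psiF σ τ with hψdef
  have hψ0 : coeff 0 ψ = 0 := by rw [hψdef, coeff_psiF, cf_zero]
  have hψ1 : coeff 1 ψ = 1 := by rw [hψdef, coeff_psiF, cf_one]
  have main : ∀ n : ℕ, coeff n (ngComp σ ψ + ngComp ψ τ) = 0 := by
    intro n
    induction n using Nat.strong_induction_on with
    | _ n IH =>
      rcases Nat.lt_or_ge n 3 with hn | hn
      · interval_cases n
        · rw [map_add, constantCoeff_ngComp, constantCoeff_ngComp, hσ0, hψ0]
          ring
        · rw [map_add, coeff_one_ngComp, coeff_one_ngComp, hσ1, hψ1, hτ1]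
          decide
        · have hψ2 : coeff 2 ψ = 0 := by
            rw [hψdef, coeff_psiF]
            exact cf_even σ τ (by omega)
          rw [map_add, coeff_ngComp, coeff_ngComp]
          rw [Finset.sum_range_succ, Finset.sum_range_succ, Finset.sum_range_one,
              Finset.sum_range_succ, Finset.sum_range_succ, Finset.sum_range_one]
          rw [pow_one, pow_one, coeff_pow_self hψ0 hψ1 2, coeff_pow_self hτ0 hτ1 2]
          rw [hψ2, hσ2, hτ2, hψ1]
          simp [PowerSeries.coeff_one]
          decide
      · rcases Nat.even_or_odd n with he | ho
        · rcases he with ⟨l, hl⟩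
          have hrw : n = (n-1) + 1 := by omega
          rw [hrw]
          exact evenstep hσ1 hτ0 hτ1 hτ2 (by omega) (by omega)
        · exact obstruction hσ0 hσ1 hτ0 hτ1 hτ2 hψ0 hσinv hτinv hn
            (by rcases ho with ⟨l, hl⟩; omega) (fun i hi => IH i hi)
  have hz : ngComp σ ψ + ngComp ψ τ = 0 := PowerSeries.ext fun n => by rw [main n, map_zero]
  have hsub : ngComp σ ψ - ngComp ψ τ = 0 := by
    rw [CharTwo.sub_eq_add]
    exact hz
  exact ⟨ψ, ⟨hψ0, hψ1⟩, sub_eq_zero.mp hsub⟩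

def PP (n : ℕ) : Prop := n = 1 ∨ ∃ k : ℕ, 2 ≤ k ∧ (n = 2 ^ k - 2 ∨ n = 2 ^ k - 1)

open Classical in
lemma coeff_sigmaS1 (n : ℕ) : coeff n sigmaS1 = if PP n then 1 else 0 := by
  rw [sigmaS1, PowerSeries.coeff_mk]
  exact if_congr Iff.rfl rfl rfl

def Pow2 (x : ℕ) : Prop := ∃ k : ℕ, x = 2 ^ k

lemma pow2_double {x : ℕ} (hx : 1 ≤ x) : Pow2 (2 * x) ↔ Pow2 x := by
  constructor
  · rintro ⟨k, hk⟩
    rcases k with _ | k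
    · omega
    · exact ⟨k, by rw [pow_succ] at hk; omega⟩
  · rintro ⟨k, hk⟩
    exact ⟨k + 1, by rw [pow_succ]; omega⟩

lemma pow2_not_odd {x : ℕ} (hx : 2 ≤ x) (hodd : x % 2 = 1) : ¬ Pow2 x := by
  rintro ⟨k, hk⟩
  rcases k with _ | k
  · omega
  · rw [pow_succ] at hk
    omega

lemma PP_iff (n : ℕ) : PP n ↔ 1 ≤ n ∧ (Pow2 (n + 1) ∨ Pow2 (n + 2)) := by
  constructor
  · rintro (rfl | ⟨k, hk, h | h⟩)
    · exact ⟨by omega, Or.inl ⟨1, by norm_num⟩⟩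
    · have h4 : 4 ≤ 2 ^ k := by
        calc 4 = 2 ^ 2 := by norm_num
        _ ≤ 2 ^ k := Nat.pow_le_pow_right (by omega) hk
      exact ⟨by omega, Or.inr ⟨k, by omega⟩⟩
    · have h4 : 4 ≤ 2 ^ k := by
        calc 4 = 2 ^ 2 := by norm_num
        _ ≤ 2 ^ k := Nat.pow_le_pow_right (by omega) hk
      exact ⟨by omega, Or.inl ⟨k, by omega⟩⟩
  · rintro ⟨h1, ⟨k, hk⟩ | ⟨k, hk⟩⟩
    · rcases Nat.lt_or_ge k 2 with h | h
      · left
        interval_cases k <;> omega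
      · have h4 : 4 ≤ 2 ^ k := by
          calc 4 = 2 ^ 2 := by norm_num
          _ ≤ 2 ^ k := Nat.pow_le_pow_right (by omega) h
        exact Or.inr ⟨k, h, Or.inr (by omega)⟩
    · rcases Nat.lt_or_ge k 2 with h | h
      · exfalso
        interval_cases k <;> omega
      · exact Or.inr ⟨k, h, Or.inl (by omega)⟩

lemma PP_2m {m : ℕ} (hm : 1 ≤ m) : PP (2*m) ↔ Pow2 (m+1) := by
  rw [PP_iff]
  have h1 : ¬ Pow2 (2*m+1) := pow2_not_odd (by omega) (by omega)
  have h2 : Pow2 (2*m+2) ↔ Pow2 (m+1) := by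
    rw [show 2*m+2 = 2*(m+1) by omega]
    exact pow2_double (by omega)
  constructor
  · rintro ⟨-, h | h⟩
    · exact absurd h h1
    · exact h2.mp h
  · intro h
    exact ⟨by omega, Or.inr (h2.mpr h)⟩

lemma PP_2m1 {m : ℕ} (hm : 1 ≤ m) : PP (2*m+1) ↔ Pow2 (m+1) := by
  rw [PP_iff]
  have h1 : ¬ Pow2 (2*m+3) := pow2_not_odd (by omega) (by omega)
  have h2 : Pow2 (2*m+1+1) ↔ Pow2 (m+1) := by
    rw [show 2*m+1+1 = 2*(m+1) by omega]
    exact pow2_double (by omega)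
  constructor
  · rintro ⟨-, h | h⟩
    · exact h2.mp h
    · exact absurd (by rwa [show 2*m+1+2 = 2*m+3 by omega] at h) h1
  · intro h
    exact ⟨by omega, Or.inl (h2.mpr h)⟩

lemma PP_2m_1 {m : ℕ} (hm : 1 ≤ m) : PP (2*m-1) ↔ Pow2 m := by
  rw [PP_iff]
  have e1 : 2*m-1+1 = 2*m := by omega
  have h2 : Pow2 (2*m) ↔ Pow2 m := pow2_double (by omega)
  have h1 : ¬ Pow2 (2*m-1+2) := by
    rw [show 2*m-1+2 = 2*m+1 by omega]
    exact pow2_not_odd (by omega) (by omega)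
  constructor
  · rintro ⟨-, h | h⟩
    · rw [e1] at h
      exact h2.mp h
    · exact absurd h h1
  · intro h
    refine ⟨by omega, Or.inl ?_⟩
    rw [e1]
    exact h2.mpr h

lemma not_both {m : ℕ} (hm : 2 ≤ m) : ¬ (Pow2 m ∧ Pow2 (m+1)) := by
  rintro ⟨⟨a, ha⟩, ⟨b, hb⟩⟩
  rcases a with _ | a
  · omega
  rcases b with _ | b
  · omega
  rw [pow_succ] at ha hb
  omega

/-- coefficient of a square in characteristic 2 -/
lemma coeff_sq (f : R) (n : ℕ) :
    coeff n (f * f) = if n % 2 = 0 then coeff (n / 2) f else 0 := by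
  rw [PowerSeries.coeff_mul]
  have hswap : ∀ (s : Finset (ℕ × ℕ)), (∀ pq ∈ s, pq.1 ≠ pq.2) →
      (∀ pq ∈ s, (pq.2, pq.1) ∈ s) →
      ∑ pq ∈ s, coeff pq.1 f * coeff pq.2 f = 0 := by
    intro s hne hmem
    refine Finset.sum_involution (fun pq _ => (pq.2, pq.1)) ?_ ?_ hmem ?_
    · intro pq hpq
      have h : coeff pq.1 f * coeff pq.2 f + coeff pq.2 f * coeff pq.1 f
          = 2 * (coeff pq.1 f * coeff pq.2 f) := by ring
      rw [h, show (2 : F2) = 0 by decide, zero_mul]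
    · intro pq hpq _
      intro hcon
      exact hne pq hpq (by rw [← congrArg Prod.fst hcon])
    · intro pq hpq
      rfl
  rcases Nat.even_or_odd n with he | ho
  · obtain ⟨m, hm⟩ := he
    rw [if_pos (by omega)]
    have hmem : (m, m) ∈ Finset.HasAntidiagonal.antidiagonal n := Finset.HasAntidiagonal.mem_antidiagonal.mpr (by omega)
    rw [← Finset.add_sum_erase _ _ hmem]
    rw [hswap ((Finset.HasAntidiagonal.antidiagonal n).erase (m, m)) ?_ ?_]
    · have hd : n / 2 = m := by omega
      rw [hd, add_zero]
      have sqid : ∀ a : F2, a * a = a := by decide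
      rw [sqid]
    · rintro ⟨p, q⟩ hpq
      simp only [Finset.mem_erase, Finset.HasAntidiagonal.mem_antidiagonal] at hpq
      intro hcon
      simp only at hcon
      apply hpq.1
      have : p = m := by omega
      subst this
      have : q = p := by omega
      subst this
      rfl
    · rintro ⟨p, q⟩ hpq
      simp only [Finset.mem_erase, Finset.HasAntidiagonal.mem_antidiagonal] at hpq ⊢
      refine ⟨?_, by omega⟩
      intro hcon
      simp only [Prod.mk.injEq] at hcon
      exact hpq.1 (by simp only [Prod.mk.injEq]; omega)
  · obtain ⟨l, hl⟩ := ho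
    rw [if_neg (by omega)]
    refine hswap _ ?_ ?_
    · rintro ⟨p, q⟩ hpq
      simp only [Finset.HasAntidiagonal.mem_antidiagonal] at hpq
      simp only
      omega
    · rintro ⟨p, q⟩ hpq
      simp only [Finset.HasAntidiagonal.mem_antidiagonal] at hpq ⊢
      omega

/-- The algebraic equation satisfied by σ_{S,1}:  X²σ² + (1+X)σ + X = 0. -/
lemma sigmaS1_eq :
    X ^ 2 * (sigmaS1 * sigmaS1) + X * sigmaS1 + sigmaS1 + X = (0 : R) := by
  ext n
  rw [map_add, map_add, map_add, map_zero]
  rw [PowerSeries.coeff_X_pow_mul' (sigmaS1 * sigmaS1) 2 n, coeff_sq]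
  have hXs : coeff n (X * sigmaS1) = if 1 ≤ n then coeff (n-1) sigmaS1 else 0 := by
    have h := PowerSeries.coeff_X_pow_mul' sigmaS1 1 n
    rw [pow_one] at h
    exact h
  rw [hXs, PowerSeries.coeff_X]
  simp only [coeff_sigmaS1]
  rcases Nat.lt_or_ge n 2 with hn | hn
  · interval_cases n
    · rw [if_neg (show ¬ (2 ≤ 0) by omega), if_neg (show ¬ (1 ≤ 0) by omega),
        if_neg (show ¬ PP 0 by rw [PP_iff]; rintro ⟨h, -⟩; omega),
        if_neg (show ¬ (0 = 1) by omega)]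
      decide
    · rw [if_neg (show ¬ (2 ≤ 1) by omega), if_pos (show 1 ≤ 1 from le_refl 1),
        if_neg (show ¬ PP (1-1) by rw [PP_iff]; rintro ⟨h, -⟩; omega),
        if_pos (show PP 1 from Or.inl rfl),
        if_pos (show 1 = 1 from rfl)]
      decide
  · rw [if_pos (by omega : 2 ≤ n), if_pos (by omega : 1 ≤ n), if_neg (by omega : ¬ n = 1)]
    rcases Nat.even_or_odd n with he | ho
    · obtain ⟨m, hm⟩ := he
      have hm1 : 1 ≤ m := by omega
      rw [if_pos (by omega : (n-2) % 2 = 0)]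
      rw [show (n-2)/2 = m - 1 by omega, show n - 1 = 2*m - 1 by omega,
        show n = 2*m by omega]
      rcases eq_or_ne m 1 with h1 | h1
      · subst h1
        norm_num
        rw [if_neg (show ¬ PP 0 by rw [PP_iff]; rintro ⟨h, -⟩; omega),
          if_pos (show PP 1 from Or.inl rfl),
          if_pos (show PP 2 from Or.inr ⟨2, le_refl 2, Or.inl (by norm_num)⟩)]
        decide
      · have hm2 : 2 ≤ m := by omega
        have e1 : PP (m-1) ↔ (Pow2 m ∨ Pow2 (m+1)) := by
          rw [PP_iff, show m-1+1 = m by omega, show m-1+2 = m+1 by omega]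
          exact ⟨fun h => h.2, fun h => ⟨by omega, h⟩⟩
        have e2 := PP_2m_1 (show 1 ≤ m by omega)
        have e3 := PP_2m (show 1 ≤ m by omega)
        have hnb := not_both hm2
        by_cases h1 : Pow2 m <;> by_cases h2 : Pow2 (m+1)
        · exact absurd ⟨h1, h2⟩ hnb
        · rw [if_pos (e1.mpr (Or.inl h1)), if_pos (e2.mpr h1),
            if_neg (fun hc => h2 (e3.mp hc))]
          decide
        · rw [if_pos (e1.mpr (Or.inr h2)), if_neg (fun hc => h1 (e2.mp hc)),
            if_pos (e3.mpr h2)]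
          decide
        · rw [if_neg (fun hc => (e1.mp hc).elim h1 h2), if_neg (fun hc => h1 (e2.mp hc)),
            if_neg (fun hc => h2 (e3.mp hc))]
          decide
    · obtain ⟨m, hm⟩ := ho
      have hm1 : 1 ≤ m := by omega
      rw [if_neg (show ¬ (n-2) % 2 = 0 by omega)]
      rw [show n - 1 = 2*m by omega, show n = 2*m+1 by omega]
      have e3 := PP_2m hm1
      have e4 := PP_2m1 hm1
      by_cases h : Pow2 (m+1)
      · rw [if_pos (e3.mpr h), if_pos (e4.mpr h)]
        decide
      · rw [if_neg (fun hc => h (e3.mp hc)), if_neg (fun hc => h (e4.mp hc))]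
        decide

/-- Any Nottingham series satisfying the symmetric quadratic equation is an involution. -/
lemma invol {σ : R} (hc : coeff 0 σ = 0)
    (hEq : X ^ 2 * (σ * σ) + X * σ + σ + X = (0 : R)) : ngComp σ σ = X := by
  have hc' : constantCoeff σ = 0 := by
    rw [← PowerSeries.coeff_zero_eq_constantCoeff]
    exact hc
  set ρ := ngComp σ σ with hρ
  have h2R : (2 : R) = 0 := by
    have := CharP.cast_eq_zero R 2
    exact_mod_cast this
  have hz : ngComp 0 σ = 0 := by
    ext k
    rw [coeff_ngComp, map_zero]
    refine Finset.sum_eq_zero fun m _ => by rw [map_zero, zero_mul]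
  have happ : σ * σ * (ρ * ρ) + σ * ρ + ρ + σ = 0 := by
    have h0 : ngComp (X ^ 2 * (σ * σ) + X * σ + σ + X) σ = 0 := by
      rw [hEq, hz]
    rw [ngComp_add_left, ngComp_add_left, ngComp_add_left,
      show (X : R)^2 = X * X from sq X] at h0
    simp only [ngComp_mul hc', ngComp_X_left hc'] at h0
    rw [← hρ] at h0
    linear_combination h0
  have hfac : (ρ + X) * (σ * σ * (ρ + X) + σ + 1) = 0 := by
    linear_combination happ + hEq + (σ*σ*ρ*X - σ) * h2R
  rcases mul_eq_zero.mp hfac with h | h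
  · have hsub : ρ - X = 0 := by
      rw [CharTwo.sub_eq_add]
      exact h
    exact sub_eq_zero.mp hsub
  · exfalso
    have hmap := congrArg (constantCoeff) h
    have hcρ : constantCoeff ρ = 0 := by
      rw [← PowerSeries.coeff_zero_eq_constantCoeff, hρ, constantCoeff_ngComp]
      exact hc
    simp [hc', hcρ] at hmap

lemma sigmaS1_sparse : IsSparse 1 sigmaS1 := by
  refine ⟨12, by norm_num, ?_⟩
  intro N hN
  set L := Nat.log 2 (N + 2) with hL
  set g : ℕ × Bool → ℕ := fun jb => 2 ^ jb.1 - 2 + (if jb.2 then 1 else 0) with hg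
  have hsub : ((Finset.range (N + 1)).filter fun k => coeff k sigmaS1 ≠ 0)
      ⊆ Finset.image g (Finset.range (L+1) ×ˢ (Finset.univ : Finset Bool)) := by
    intro k hk
    simp only [Finset.mem_filter, Finset.mem_range] at hk
    have hPP : PP k := by
      by_contra hP
      rw [coeff_sigmaS1, if_neg hP] at hk
      exact hk.2 rfl
    rw [PP_iff] at hPP
    obtain ⟨hk1, hcase⟩ := hPP
    rw [Finset.mem_image]
    rcases hcase with ⟨j, hj⟩ | ⟨j, hj⟩
    · -- k + 1 = 2^j, k = 2^j - 1, j ≥ 1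
      have hj1 : 1 ≤ j := by
        by_contra hc
        interval_cases j <;> omega
      refine ⟨(j, true), ?_, ?_⟩
      · simp only [Finset.mem_product, Finset.mem_range, Finset.mem_univ, and_true]
        have : 2 ^ j ≤ N + 2 := by omega
        have := (Nat.le_log_iff_pow_le (by omega) (by omega)).mpr this
        omega
      · have h2 : 2 ≤ 2 ^ j := by
          calc 2 = 2 ^ 1 := by norm_num
          _ ≤ 2 ^ j := Nat.pow_le_pow_right (by omega) hj1
        have hgv : g (j, true) = 2 ^ j - 2 + 1 := by simp [hg]
        rw [hgv]
        omega
    · refine ⟨(j, false), ?_, ?_⟩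
      · simp only [Finset.mem_product, Finset.mem_range, Finset.mem_univ, and_true]
        have : 2 ^ j ≤ N + 2 := by omega
        have := (Nat.le_log_iff_pow_le (by omega) (by omega)).mpr this
        omega
      · have hgv : g (j, false) = 2 ^ j - 2 := by simp [hg]
        rw [hgv]
        omega
  have hcard : ((Finset.range (N + 1)).filter fun k => coeff k sigmaS1 ≠ 0).card
      ≤ 2 * (L + 1) := by
    calc ((Finset.range (N + 1)).filter fun k => coeff k sigmaS1 ≠ 0).card
        ≤ (Finset.image g (Finset.range (L+1) ×ˢ (Finset.univ : Finset Bool))).card :=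
          Finset.card_le_card hsub
      _ ≤ ((Finset.range (L+1) ×ˢ (Finset.univ : Finset Bool))).card :=
          Finset.card_image_le
      _ = (L+1) * 2 := by
          rw [Finset.card_product, Finset.card_range, Finset.card_univ]
          simp
      _ = 2 * (L + 1) := by ring
  -- real estimates
  have hNR : (2:ℝ) ≤ (N:ℝ) := by exact_mod_cast hN
  have hcardR : (((Finset.range (N + 1)).filter fun k => coeff k sigmaS1 ≠ 0).card : ℝ)
      ≤ 2*(L:ℝ) + 2 := by
    have : ((2 * (L + 1) : ℕ) : ℝ) = 2*(L:ℝ) + 2 := by push_cast; ring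
    rw [← this]
    exact_mod_cast hcard
  have hpow : (2:ℕ)^L ≤ N + 2 := Nat.pow_log_le_self 2 (by omega)
  have hlogL : (L:ℝ) * Real.log 2 ≤ Real.log ((N:ℝ)+2) := by
    have h1 : ((2:ℝ))^L ≤ (N:ℝ)+2 := by exact_mod_cast hpow
    have h2 := Real.log_le_log (by positivity) h1
    rwa [Real.log_pow] at h2
  have hN2 : ((N:ℝ)+2) ≤ (N:ℝ)^2 := by nlinarith
  have hlog2N : Real.log ((N:ℝ)+2) ≤ 2 * Real.log N := by
    have h2 := Real.log_le_log (by positivity) hN2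
    rwa [Real.log_pow] at h2
  have hlog2 : (0.5:ℝ) < Real.log 2 := by
    have := Real.log_two_gt_d9
    linarith
  have hlogN : Real.log 2 ≤ Real.log N := Real.log_le_log (by norm_num) hNR
  have hL0 : (0:ℝ) ≤ (L:ℝ) := Nat.cast_nonneg L
  have hL4 : (L:ℝ) ≤ 4 * Real.log N := by nlinarith
  rw [pow_one]
  linarith

end NG

theorem statement13 :
    IsNott sigmaS1 ∧ ngComp sigmaS1 sigmaS1 = PowerSeries.X ∧ sigmaS1 ≠ PowerSeries.X ∧
    HasDepth sigmaS1 1 ∧ IsSparse 1 sigmaS1 ∧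
    ∀ σ : PowerSeries F2, IsNott σ → ngComp σ σ = PowerSeries.X → σ ≠ PowerSeries.X →
      HasDepth σ 1 → NGConj σ sigmaS1 := by
  have h0 : PowerSeries.coeff 0 sigmaS1 = 0 := by
    rw [NG.coeff_sigmaS1, if_neg (by rw [NG.PP_iff]; rintro ⟨h, -⟩; omega)]
  have h1 : PowerSeries.coeff 1 sigmaS1 = 1 := by
    rw [NG.coeff_sigmaS1, if_pos (show NG.PP 1 from Or.inl rfl)]
  have h2 : PowerSeries.coeff 2 sigmaS1 = 1 := by
    rw [NG.coeff_sigmaS1, if_pos (show NG.PP 2 from Or.inr ⟨2, le_refl 2, Or.inl (by norm_num)⟩)]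
  have hinv : ngComp sigmaS1 sigmaS1 = PowerSeries.X := NG.invol h0 NG.sigmaS1_eq
  refine ⟨⟨h0, h1⟩, hinv, ?_, ?_, NG.sigmaS1_sparse, ?_⟩
  · intro hEq
    have hc := congrArg (PowerSeries.coeff 2) hEq
    rw [h2, PowerSeries.coeff_X, if_neg (by omega)] at hc
    exact absurd hc (by decide)
  · constructor
    · intro i hi
      interval_cases i
      · rw [map_sub, h0, PowerSeries.coeff_X, if_neg (by omega), sub_zero]
      · rw [map_sub, h1, PowerSeries.coeff_X, if_pos rfl, sub_self]
    · rw [map_sub, h2, PowerSeries.coeff_X, if_neg (by omega), sub_zero]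
      decide
  · intro σ hσN hσinv hσne hσd
    have hσ2 : PowerSeries.coeff 2 σ = 1 := by
      have h := hσd.2
      rw [map_sub, PowerSeries.coeff_X, if_neg (by omega), sub_zero] at h
      revert h
      generalize PowerSeries.coeff 2 σ = a
      revert a
      decide
    obtain ⟨ψ, hψ, heq⟩ := NG.conjugate hσN.1 hσN.2 hσ2 hσinv h0 h1 h2 hinv
    exact ⟨ψ, hψ, heq⟩
end

section
/- Let σ = Σ_{k≥0} a_k t^k ∈ F₂[[t]] be a power series. The following conditions are equivalent: (1) there exist a sparse power series ρ ∈ F₂[[t]] and nonzero polynomials p, q ∈ F₂[t] such that q·σ = p·ρ in F₂[[t]] (i.e., σ is the product of a sparse power series and a rational function); (2) there exists an integer m ≥ 1 such that (t^m + 1)·σ is sparse; (3) there exists an integer m ≥ 1 such that the power series Σ_{k≥0} (a_k + a_{k+m}) t^k is sparse; (4) there exists an integer m ≥ 1 such that for every integer q ≥ 0 the power series Σ_{k≥0} (a_k + a_{k+2^q·m}) t^k is sparse. -/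
open PowerSeries

/-- `σ` is sparse. -/
def Sparse (σ : PowerSeries F2) : Prop := ∃ r : ℕ, IsSparse r σ

lemma log_two_pos' : (0:ℝ) < Real.log 2 := Real.log_pos (by norm_num)

lemma log_nat_ge {N : ℕ} (hN : 2 ≤ N) : Real.log 2 ≤ Real.log N := by
  apply Real.log_le_log (by norm_num)
  exact_mod_cast hN

lemma IsSparse.mono {r r' : ℕ} {σ : PowerSeries F2} (h : IsSparse r σ) (hr : r ≤ r') :
    IsSparse r' σ := by
  obtain ⟨C, hC, hb⟩ := h
  have hl2 := log_two_pos'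
  refine ⟨C * (Real.log 2)⁻¹ ^ (r' - r), by positivity, fun N hN => ?_⟩
  have hlN := log_nat_ge hN
  have hlN0 : 0 ≤ Real.log N := le_trans hl2.le hlN
  have key : Real.log N ^ r ≤ (Real.log 2)⁻¹ ^ (r' - r) * Real.log N ^ r' := by
    rw [inv_pow, ← div_eq_inv_mul, le_div_iff₀ (by positivity)]
    have : Real.log N ^ r * Real.log 2 ^ (r' - r) ≤ Real.log N ^ r * Real.log N ^ (r' - r) := by
      apply mul_le_mul_of_nonneg_left (pow_le_pow_left₀ hl2.le hlN _) (by positivity)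
    refine this.trans_eq ?_
    rw [← pow_add, Nat.add_sub_cancel' hr]
  calc (((Finset.range (N + 1)).filter fun k => PowerSeries.coeff k σ ≠ 0).card : ℝ)
      ≤ C * Real.log N ^ r := hb N hN
    _ ≤ C * ((Real.log 2)⁻¹ ^ (r' - r) * Real.log N ^ r') :=
        mul_le_mul_of_nonneg_left key hC.le
    _ = C * (Real.log 2)⁻¹ ^ (r' - r) * Real.log N ^ r' := by ring

lemma Sparse.add {σ τ : PowerSeries F2} (hσ : Sparse σ) (hτ : Sparse τ) : Sparse (σ + τ) := by
  obtain ⟨r₁, h₁⟩ := hσ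
  obtain ⟨r₂, h₂⟩ := hτ
  obtain ⟨C₁, hC₁, hb₁⟩ := h₁.mono (le_max_left r₁ r₂)
  obtain ⟨C₂, hC₂, hb₂⟩ := h₂.mono (le_max_right r₁ r₂)
  refine ⟨max r₁ r₂, C₁ + C₂, by positivity, fun N hN => ?_⟩
  have hsub : ((Finset.range (N + 1)).filter fun k => PowerSeries.coeff k (σ + τ) ≠ 0) ⊆
      (((Finset.range (N + 1)).filter fun k => PowerSeries.coeff k σ ≠ 0) ∪
       ((Finset.range (N + 1)).filter fun k => PowerSeries.coeff k τ ≠ 0)) := by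
    intro k hk
    simp only [Finset.mem_filter, Finset.mem_union, map_add] at hk ⊢
    rcases hk with ⟨hk1, hk2⟩
    by_contra hcon
    push_neg at hcon
    obtain ⟨ha, hb⟩ := hcon
    exact hk2 (by rw [ha hk1, hb hk1, add_zero])
  calc (((Finset.range (N + 1)).filter fun k => PowerSeries.coeff k (σ + τ) ≠ 0).card : ℝ)
      ≤ ((((Finset.range (N + 1)).filter fun k => PowerSeries.coeff k σ ≠ 0) ∪
         ((Finset.range (N + 1)).filter fun k => PowerSeries.coeff k τ ≠ 0)).card : ℝ) := by
        exact_mod_cast Finset.card_le_card hsub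
    _ ≤ (((Finset.range (N + 1)).filter fun k => PowerSeries.coeff k σ ≠ 0).card : ℝ) +
        (((Finset.range (N + 1)).filter fun k => PowerSeries.coeff k τ ≠ 0).card : ℝ) := by
        exact_mod_cast Finset.card_union_le _ _
    _ ≤ C₁ * Real.log N ^ (max r₁ r₂) + C₂ * Real.log N ^ (max r₁ r₂) :=
        add_le_add (hb₁ N hN) (hb₂ N hN)
    _ = (C₁ + C₂) * Real.log N ^ (max r₁ r₂) := by ring

lemma sparse_zero : Sparse (0 : PowerSeries F2) := by
  refine ⟨0, 1, one_pos, fun N hN => ?_⟩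
  simp

/-- If the nonzero coefficients of `τ` inject (via `k ↦ k + d`) into those of `σ`,
then sparsity of `σ` gives sparsity of `τ`. -/
lemma sparse_of_shift_add {τ σ : PowerSeries F2} (d : ℕ)
    (h : ∀ k, PowerSeries.coeff k τ ≠ 0 → PowerSeries.coeff (k + d) σ ≠ 0)
    (hσ : Sparse σ) : Sparse τ := by
  obtain ⟨r, C, hC, hb⟩ := hσ
  have hl2 := log_two_pos'
  have hKnn : (0:ℝ) ≤ Real.log ((d:ℝ) + 1) / Real.log 2 := by
    apply div_nonneg _ hl2.le
    apply Real.log_nonneg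
    linarith [Nat.cast_nonneg (α := ℝ) d]
  set K : ℝ := 1 + Real.log ((d:ℝ) + 1) / Real.log 2 with hKdef
  have hK1 : (1:ℝ) ≤ K := by rw [hKdef]; linarith
  have hK0 : (0:ℝ) < K := by linarith
  refine ⟨r, C * K ^ r, by positivity, fun N hN => ?_⟩
  have hcard : (((Finset.range (N + 1)).filter fun k => PowerSeries.coeff k τ ≠ 0).card) ≤
      (((Finset.range (N + d + 1)).filter fun k => PowerSeries.coeff k σ ≠ 0).card) := by
    apply Finset.card_le_card_of_injOn (fun k => k + d)
    · intro k hk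
      simp only [Finset.mem_coe, Finset.mem_filter, Finset.mem_range] at hk ⊢
      exact ⟨by omega, h k hk.2⟩
    · intro a _ b _ hab
      have : a + d = b + d := hab
      omega
  have hb' := hb (N + d) (by omega)
  have hlN := log_nat_ge hN
  have hlN0 : (0:ℝ) ≤ Real.log N := le_trans hl2.le hlN
  have hN1 : (1:ℝ) ≤ (N:ℝ) := by exact_mod_cast hN.trans' (by norm_num)
  have hlog : Real.log ((N:ℝ) + (d:ℝ)) ≤ Real.log N * K := by
    have h1 : Real.log ((N:ℝ) + (d:ℝ)) ≤ Real.log ((N:ℝ) * ((d:ℝ) + 1)) := by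
      apply Real.log_le_log (by positivity)
      nlinarith [Nat.cast_nonneg (α := ℝ) d]
    have h2 : Real.log ((N:ℝ) * ((d:ℝ) + 1)) = Real.log N + Real.log ((d:ℝ) + 1) := by
      apply Real.log_mul (by positivity) (by positivity)
    have h3 : Real.log ((d:ℝ) + 1) ≤ Real.log N * (Real.log ((d:ℝ) + 1) / Real.log 2) := by
      rw [mul_div_assoc', le_div_iff₀ hl2]
      have := mul_le_mul_of_nonneg_left hlN
        (Real.log_nonneg (by linarith [Nat.cast_nonneg (α := ℝ) d] : (1:ℝ) ≤ (d:ℝ)+1))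
      linarith
    rw [h2] at h1
    rw [hKdef]
    nlinarith
  have hlogpow : Real.log ((N:ℝ) + (d:ℝ)) ^ r ≤ (Real.log N * K) ^ r := by
    apply pow_le_pow_left₀ _ hlog
    apply Real.log_nonneg; linarith [Nat.cast_nonneg (α := ℝ) d]
  calc (((Finset.range (N + 1)).filter fun k => PowerSeries.coeff k τ ≠ 0).card : ℝ)
      ≤ (((Finset.range (N + d + 1)).filter fun k => PowerSeries.coeff k σ ≠ 0).card : ℝ) := by
        exact_mod_cast hcard
    _ ≤ C * Real.log (↑(N + d)) ^ r := hb'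
    _ = C * Real.log ((N:ℝ) + (d:ℝ)) ^ r := by push_cast; ring_nf
    _ ≤ C * (Real.log N * K) ^ r := mul_le_mul_of_nonneg_left hlogpow hC.le
    _ = C * K ^ r * Real.log N ^ r := by rw [mul_pow]; ring

/-- Shift in the other direction: nonzero coefficients of `τ` at `k` force a
nonzero coefficient of `σ` at `k - d` (with `d ≤ k`). -/
lemma sparse_of_shift_sub {τ σ : PowerSeries F2} (d : ℕ)
    (h : ∀ k, PowerSeries.coeff k τ ≠ 0 → d ≤ k ∧ PowerSeries.coeff (k - d) σ ≠ 0)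
    (hσ : Sparse σ) : Sparse τ := by
  obtain ⟨r, C, hC, hb⟩ := hσ
  refine ⟨r, C, hC, fun N hN => ?_⟩
  have hcard : (((Finset.range (N + 1)).filter fun k => PowerSeries.coeff k τ ≠ 0).card) ≤
      (((Finset.range (N + 1)).filter fun k => PowerSeries.coeff k σ ≠ 0).card) := by
    apply Finset.card_le_card_of_injOn (fun k => k - d)
    · intro k hk
      simp only [Finset.mem_coe, Finset.mem_filter, Finset.mem_range] at hk ⊢
      exact ⟨by omega, (h k hk.2).2⟩
    · intro a ha b hb' hab
      simp only [Finset.coe_filter, Set.mem_setOf_eq] at ha hb'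
      have ha2 := (h a ha.2).1
      have hb2 := (h b hb'.2).1
      have : a - d = b - d := hab
      omega
  exact le_trans (by exact_mod_cast hcard) (hb N hN)

lemma sparse_coe (p : Polynomial F2) : Sparse (p : PowerSeries F2) := by
  refine ⟨0, p.support.card + 1, by positivity, fun N hN => ?_⟩
  have hsub : ((Finset.range (N + 1)).filter fun k => PowerSeries.coeff k (p : PowerSeries F2) ≠ 0)
      ⊆ p.support := by
    intro k hk
    simp only [Finset.mem_filter, Polynomial.coeff_coe] at hk
    exact Polynomial.mem_support_iff.mpr hk.2
  have := Finset.card_le_card hsub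
  rw [pow_zero, mul_one]
  calc (((Finset.range (N + 1)).filter fun k => PowerSeries.coeff k (p : PowerSeries F2) ≠ 0).card : ℝ)
      ≤ (p.support.card : ℝ) := Nat.cast_le.mpr this
    _ ≤ (p.support.card : ℝ) + 1 := by linarith

lemma sparse_X_pow_mul {ρ : PowerSeries F2} (n : ℕ) (hρ : Sparse ρ) :
    Sparse (PowerSeries.X ^ n * ρ) := by
  apply sparse_of_shift_sub n _ hρ
  intro k hk
  by_cases hkn : n ≤ k
  · refine ⟨hkn, ?_⟩
    obtain ⟨j, rfl⟩ := Nat.exists_eq_add_of_le hkn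
    rw [add_comm n j] at hk ⊢
    rw [PowerSeries.coeff_X_pow_mul] at hk
    simpa using hk
  · exfalso
    apply hk
    rw [PowerSeries.coeff_mul]
    apply Finset.sum_eq_zero
    intro x hx
    rw [PowerSeries.coeff_X_pow]
    have : x.1 ≠ n := by
      have := Finset.HasAntidiagonal.mem_antidiagonal.mp hx
      omega
    simp [this]

lemma sparse_poly_mul {ρ : PowerSeries F2} (p : Polynomial F2) (hρ : Sparse ρ) :
    Sparse ((p : PowerSeries F2) * ρ) := by
  induction p using Polynomial.induction_on' with
  | add f g hf hg =>
    rw [Polynomial.coe_add, add_mul]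
    exact hf.add hg
  | monomial n a =>
    have ha : a = 0 ∨ a = 1 := by revert a; decide
    rcases ha with rfl | rfl
    · simp only [Polynomial.monomial_zero_right, Polynomial.coe_zero, zero_mul]
      exact sparse_zero
    · rw [Polynomial.coe_monomial, ← PowerSeries.X_pow_eq]
      exact sparse_X_pow_mul n hρ

lemma dvd_X_pow_add_one {q : Polynomial F2} (hq : q ≠ 0)
    (hX : ¬ (Polynomial.X : Polynomial F2) ∣ q) :
    ∃ m : ℕ, 1 ≤ m ∧ q ∣ Polynomial.X ^ m + 1 := by
  have pb := AdjoinRoot.powerBasis hq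
  have : Module.Finite F2 (AdjoinRoot q) := pb.finite
  have : Finite (AdjoinRoot q) := Module.finite_of_finite F2
  obtain ⟨n, n', hne, heq⟩ :=
    Finite.exists_ne_map_eq_of_infinite (fun n : ℕ => (AdjoinRoot.mk q Polynomial.X) ^ n)
  wlog hlt : n < n' generalizing n n'
  · exact this n' n hne.symm heq.symm (by omega)
  obtain ⟨d, rfl⟩ := Nat.exists_eq_add_of_lt hlt
  refine ⟨d + 1, by omega, ?_⟩
  have hdvd : q ∣ Polynomial.X ^ (n + d + 1) - Polynomial.X ^ n := by
    rw [← AdjoinRoot.mk_eq_zero, map_sub, sub_eq_zero, map_pow, map_pow]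
    exact heq.symm
  have hfac : (Polynomial.X : Polynomial F2) ^ (n + d + 1) - Polynomial.X ^ n
      = (Polynomial.X : Polynomial F2) ^ n * (Polynomial.X ^ (d + 1) - 1) := by
    rw [mul_sub, mul_one, ← pow_add, Nat.add_assoc]
  rw [hfac] at hdvd
  have hcop : IsCoprime q ((Polynomial.X : Polynomial F2) ^ n) :=
    (((Polynomial.irreducible_X).coprime_iff_not_dvd.mpr hX).symm.pow_right)
  have := hcop.dvd_of_dvd_mul_left hdvd
  rwa [CharTwo.sub_eq_add] at this

lemma iff_23 (σ : PowerSeries F2) :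
    (∃ m : ℕ, 1 ≤ m ∧ Sparse ((PowerSeries.X ^ m + 1) * σ)) ↔
      ∃ m : ℕ, 1 ≤ m ∧ Sparse (PowerSeries.mk fun k =>
        PowerSeries.coeff k σ + PowerSeries.coeff (k + m) σ) := by
  constructor
  · rintro ⟨m, hm, hs⟩
    refine ⟨m, hm, ?_⟩
    apply sparse_of_shift_add m _ hs
    intro k hk
    rw [PowerSeries.coeff_mk] at hk
    have hco : PowerSeries.coeff (k + m) ((PowerSeries.X ^ m + 1) * σ)
        = PowerSeries.coeff k σ + PowerSeries.coeff (k + m) σ := by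
      rw [add_mul, one_mul, map_add, PowerSeries.coeff_X_pow_mul]
    rw [hco]
    exact hk
  · rintro ⟨m, hm, hs⟩
    refine ⟨m, hm, ?_⟩
    have hEq : (PowerSeries.X ^ m + 1) * σ =
        PowerSeries.X ^ m * (PowerSeries.mk fun k =>
          PowerSeries.coeff k σ + PowerSeries.coeff (k + m) σ) +
        ((σ.trunc m : Polynomial F2) : PowerSeries F2) := by
      ext k
      rw [map_add, add_mul, one_mul, map_add, PowerSeries.coeff_X_pow_mul',
        PowerSeries.coeff_X_pow_mul', Polynomial.coeff_coe, PowerSeries.coeff_trunc]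
      by_cases hkm : m ≤ k
      · rw [if_pos hkm, if_pos hkm, if_neg (by omega), PowerSeries.coeff_mk,
          Nat.sub_add_cancel hkm, add_zero, add_comm]
      · rw [if_neg hkm, if_neg hkm, if_pos (by omega)]
    rw [hEq]
    exact (sparse_X_pow_mul m hs).add (sparse_coe _)

lemma iff_34 (σ : PowerSeries F2) :
    (∃ m : ℕ, 1 ≤ m ∧ Sparse (PowerSeries.mk fun k =>
        PowerSeries.coeff k σ + PowerSeries.coeff (k + m) σ)) ↔
      ∃ m : ℕ, 1 ≤ m ∧ ∀ q : ℕ, Sparse (PowerSeries.mk fun k =>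
        PowerSeries.coeff k σ + PowerSeries.coeff (k + 2 ^ q * m) σ) := by
  constructor
  · rintro ⟨m, hm, hs⟩
    refine ⟨m, hm, ?_⟩
    intro q
    induction q with
    | zero => simpa using hs
    | succ q ih =>
      have hEq : (PowerSeries.mk fun k =>
          PowerSeries.coeff k σ + PowerSeries.coeff (k + 2 ^ (q + 1) * m) σ) =
          (PowerSeries.mk fun k =>
            PowerSeries.coeff k σ + PowerSeries.coeff (k + 2 ^ q * m) σ) +
          (PowerSeries.mk fun k =>
            PowerSeries.coeff (k + 2 ^ q * m) σ
              + PowerSeries.coeff (k + 2 ^ q * m + 2 ^ q * m) σ) := by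
        ext k
        rw [map_add, PowerSeries.coeff_mk, PowerSeries.coeff_mk, PowerSeries.coeff_mk]
        have he : k + 2 ^ (q + 1) * m = k + 2 ^ q * m + 2 ^ q * m := by ring
        rw [he]
        have h2 : ∀ x y z : F2, x + z = x + y + (y + z) := by decide
        exact h2 _ _ _
      rw [hEq]
      refine ih.add ?_
      apply sparse_of_shift_add (2 ^ q * m) _ ih
      intro k hk
      rw [PowerSeries.coeff_mk] at hk ⊢
      exact hk
  · rintro ⟨m, hm, hs⟩
    exact ⟨m, hm, by simpa using hs 0⟩

lemma iff_12 (σ : PowerSeries F2) :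
    (∃ (ρ : PowerSeries F2) (p q : Polynomial F2), Sparse ρ ∧ p ≠ 0 ∧ q ≠ 0 ∧
        (q : PowerSeries F2) * σ = (p : PowerSeries F2) * ρ) ↔
      ∃ m : ℕ, 1 ≤ m ∧ Sparse ((PowerSeries.X ^ m + 1) * σ) := by
  constructor
  · rintro ⟨ρ, p, q, hρ, hp, hq, heq⟩
    obtain ⟨q₁, hfac, hXq₁⟩ := Polynomial.exists_eq_pow_rootMultiplicity_mul_and_not_dvd q hq 0
    rw [Polynomial.C_0, sub_zero] at hfac hXq₁
    set s := Polynomial.rootMultiplicity 0 q with hs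
    have hq₁ne : q₁ ≠ 0 := by
      intro h
      rw [h, mul_zero] at hfac
      exact hq hfac
    have hpρ : Sparse ((p : PowerSeries F2) * ρ) := sparse_poly_mul p hρ
    set μ : PowerSeries F2 :=
      PowerSeries.mk fun k => PowerSeries.coeff (k + s) ((p : PowerSeries F2) * ρ) with hμ
    have hμs : Sparse μ := by
      apply sparse_of_shift_add s _ hpρ
      intro k hk
      rwa [hμ, PowerSeries.coeff_mk] at hk
    have hq₁σ : (q₁ : PowerSeries F2) * σ = μ := by
      have h1 : (PowerSeries.X : PowerSeries F2) ^ s * ((q₁ : PowerSeries F2) * σ)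
          = (p : PowerSeries F2) * ρ := by
        rw [← heq, hfac, Polynomial.coe_mul, Polynomial.coe_pow, Polynomial.coe_X, mul_assoc]
      ext k
      rw [hμ, PowerSeries.coeff_mk, ← h1, PowerSeries.coeff_X_pow_mul]
    obtain ⟨m, hm1, hdvd⟩ := dvd_X_pow_add_one hq₁ne hXq₁
    obtain ⟨h, hh⟩ := hdvd
    refine ⟨m, hm1, ?_⟩
    have hEq : (PowerSeries.X ^ m + 1 : PowerSeries F2) * σ = (h : PowerSeries F2) * μ := by
      rw [← hq₁σ]
      have hc : (PowerSeries.X ^ m + 1 : PowerSeries F2)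
          = ((Polynomial.X ^ m + 1 : Polynomial F2) : PowerSeries F2) := by
        rw [Polynomial.coe_add, Polynomial.coe_pow, Polynomial.coe_X, Polynomial.coe_one]
      rw [hc, hh, Polynomial.coe_mul]
      ring
    rw [hEq]
    exact sparse_poly_mul h hμs
  · rintro ⟨m, hm, hs⟩
    refine ⟨(PowerSeries.X ^ m + 1) * σ, 1, Polynomial.X ^ m + 1, hs, one_ne_zero, ?_, ?_⟩
    · intro hcon
      have h0 : (Polynomial.X ^ m + 1 : Polynomial F2).coeff 0 = 1 := by
        rw [Polynomial.coeff_add, Polynomial.coeff_X_pow, Polynomial.coeff_one,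
          if_neg (by omega : ¬ (0:ℕ) = m), if_pos rfl, zero_add]
      rw [hcon] at h0
      simp at h0
    · rw [Polynomial.coe_add, Polynomial.coe_pow, Polynomial.coe_X, Polynomial.coe_one, one_mul]

theorem statement16 (σ : PowerSeries F2) :
    ((∃ (ρ : PowerSeries F2) (p q : Polynomial F2), Sparse ρ ∧ p ≠ 0 ∧ q ≠ 0 ∧
        (q : PowerSeries F2) * σ = (p : PowerSeries F2) * ρ) ↔
      ∃ m : ℕ, 1 ≤ m ∧ Sparse ((PowerSeries.X ^ m + 1) * σ)) ∧
    ((∃ m : ℕ, 1 ≤ m ∧ Sparse ((PowerSeries.X ^ m + 1) * σ)) ↔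
      ∃ m : ℕ, 1 ≤ m ∧ Sparse (PowerSeries.mk fun k =>
        PowerSeries.coeff k σ + PowerSeries.coeff (k + m) σ)) ∧
    ((∃ m : ℕ, 1 ≤ m ∧ Sparse (PowerSeries.mk fun k =>
        PowerSeries.coeff k σ + PowerSeries.coeff (k + m) σ)) ↔
      ∃ m : ℕ, 1 ≤ m ∧ ∀ q : ℕ, Sparse (PowerSeries.mk fun k =>
        PowerSeries.coeff k σ + PowerSeries.coeff (k + 2 ^ q * m) σ)) :=
  ⟨iff_12 σ, iff_23 σ, iff_34 σ⟩
end
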